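/- arXiv:2012.05145 — 2 statements merged into one kernel-verified Lean document; each statement's English description precedes it below -/
import Mathlib

section
/- For each vertex i of the k-th power of a cycle C_n^k (with k < n/2), define the path Q_i = v_0 v_1 ... v_k by v_0 = i and v_j = v_{j-1} + j (mod n) if j is odd, v_j = v_{j-1} - j (mod n) if j is even. Then the set {Q_i : i ∈ V(C_n^k)} is a decomposition of C_n^k into paths with k edges. -/
open SimpleGraph

/-- The `k`-th power of the cycle on `n` vertices. -/
def cyclePower (n k : ℕ) : SimpleGraph (ZMod n) where
  Adj x y := x ≠ y ∧ ∃ r : ℤ, r.natAbs ≤ k ∧ x - y = (r : ZMod n)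
  symm := by
    refine ⟨?_⟩
    rintro x y ⟨hxy, r, hr, h⟩
    exact ⟨hxy.symm, -r, by simpa using hr, by rw [Int.cast_neg, ← h, neg_sub]⟩
  loopless := by refine ⟨?_⟩; rintro x ⟨h, -⟩; exact h rfl

/-- The vertices `v_0, v_1, …` of the path `Q_i`: `v_0 = i`, and `v_j = v_{j-1} + j` if `j` is
odd, `v_j = v_{j-1} - j` if `j` is even (arithmetic in `ZMod n`). -/
def qvert (n : ℕ) (i : ZMod n) : ℕ → ZMod n
  | 0 => i
  | j + 1 => if (j + 1) % 2 = 1 then qvert n i j + ((j + 1 : ℕ) : ZMod n)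
             else qvert n i j - ((j + 1 : ℕ) : ZMod n)

/-- Closed-form displacement of `qvert`. -/
def cZ (j : ℕ) : ℤ := if j % 2 = 1 then (((j+1)/2 : ℕ) : ℤ) else -(((j/2 : ℕ) : ℤ))

lemma qvert_eq (n : ℕ) (i : ZMod n) : ∀ j, qvert n i j = i + ((cZ j : ℤ) : ZMod n)
  | 0 => by simp [qvert, cZ]
  | (j+1) => by
    by_cases h : (j+1) % 2 = 1
    · rw [qvert, if_pos h, qvert_eq n i j]
      have hc : cZ (j+1) = cZ j + ((j:ℤ)+1) := by unfold cZ; split_ifs <;> omega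
      rw [hc]; push_cast; ring
    · rw [qvert, if_neg h, qvert_eq n i j]
      have hc : cZ (j+1) = cZ j - ((j:ℤ)+1) := by unfold cZ; split_ifs <;> omega
      rw [hc]; push_cast; ring

lemma cZ_succ_sub (j : ℕ) : cZ (j+1) - cZ j = if j % 2 = 0 then ((j:ℤ)+1) else -((j:ℤ)+1) := by
  unfold cZ; split_ifs <;> omega

lemma int_cast_inj_small {n : ℕ} {a b : ℤ} (h : (a : ZMod n) = (b : ZMod n))
    (h1 : -(n:ℤ) < a - b) (h2 : a - b < n) : a = b := by
  have hz : ((a - b : ℤ) : ZMod n) = 0 := by push_cast; rw [h]; ring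
  have hd : (n:ℤ) ∣ (a - b) := by rwa [ZMod.intCast_zmod_eq_zero_iff_dvd] at hz
  have := Int.eq_zero_of_abs_lt_dvd hd (by rw [abs_lt]; omega)
  omega

/-- For each vertex `i` of `C_n^k` (with `k < n/2`), the walk
`Q_i = v_0 v_1 ⋯ v_k` given by `qvert` is a path with `k` edges, and the set
`{Q_i : i ∈ V(C_n^k)}` is a decomposition of `C_n^k`: every edge of `C_n^k` is an edge of
exactly one `Q_i` (at exactly one position). -/
theorem stmt_4 (n k : ℕ) (hk : 0 < k) (hn : 2 * k < n) :
    (∀ i : ZMod n,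
      ((List.range (k + 1)).map (qvert n i)).Nodup ∧
      ∀ j < k, (cyclePower n k).Adj (qvert n i j) (qvert n i (j + 1))) ∧
    (∀ e ∈ (cyclePower n k).edgeSet,
      ∃! p : ZMod n × ℕ, p.2 < k ∧ e = s(qvert n p.1 p.2, qvert n p.1 (p.2 + 1))) := by
  -- bounds on cZ
  have hcb : ∀ j ≤ k, -(k:ℤ) ≤ cZ j ∧ cZ j ≤ k := by
    intro j hj; unfold cZ; split_ifs <;> omega
  -- uniqueness core
  have huniq : ∀ (i i' : ZMod n) (j j' : ℕ), j < k → j' < k →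
      s(qvert n i j, qvert n i (j+1)) = s(qvert n i' j', qvert n i' (j'+1)) →
      i = i' ∧ j = j' := by
    intro i i' j j' hj hj' h
    have hbj := cZ_succ_sub j
    have hbj' := cZ_succ_sub j'
    rw [qvert_eq, qvert_eq, qvert_eq, qvert_eq, Sym2.eq_iff] at h
    rcases h with ⟨h1, h2⟩ | ⟨h1, h2⟩
    · have hd : ((cZ (j+1) - cZ j : ℤ) : ZMod n) = ((cZ (j'+1) - cZ j' : ℤ) : ZMod n) := by
        push_cast; linear_combination h2 - h1
      have hδ : cZ (j+1) - cZ j = cZ (j'+1) - cZ j' := by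
        apply int_cast_inj_small hd <;> (split_ifs at hbj hbj' <;> omega)
      have hjj : j = j' := by split_ifs at hbj hbj' <;> omega
      subst hjj
      refine ⟨?_, rfl⟩
      exact add_right_cancel h1
    · have hd : ((cZ (j+1) - cZ j : ℤ) : ZMod n) = ((-(cZ (j'+1) - cZ j') : ℤ) : ZMod n) := by
        push_cast; linear_combination h2 - h1
      have hδ : cZ (j+1) - cZ j = -(cZ (j'+1) - cZ j') := by
        apply int_cast_inj_small hd <;> (split_ifs at hbj hbj' <;> omega)
      exfalso; split_ifs at hbj hbj' <;> omega
  constructor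
  · intro i
    constructor
    · apply List.Nodup.map_on _ List.nodup_range
      intro j hj j' hj' hff
      rw [List.mem_range] at hj hj'
      rw [qvert_eq, qvert_eq] at hff
      have h1 : ((cZ j : ℤ) : ZMod n) = ((cZ j' : ℤ) : ZMod n) := add_left_cancel hff
      have h2 : cZ j = cZ j' := by
        have b1 := hcb j (by omega); have b2 := hcb j' (by omega)
        apply int_cast_inj_small h1 <;> omega
      revert h2; unfold cZ; split_ifs <;> omega
    · intro j hj
      constructor
      · intro hEq
        rw [qvert_eq, qvert_eq] at hEq
        have h1 : ((cZ j : ℤ) : ZMod n) = ((cZ (j+1) : ℤ) : ZMod n) := add_left_cancel hEq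
        have hbj := cZ_succ_sub j
        have h2 : cZ j = cZ (j+1) := by
          apply int_cast_inj_small h1 <;> (split_ifs at hbj <;> omega)
        split_ifs at hbj <;> omega
      · refine ⟨cZ j - cZ (j+1), ?_, ?_⟩
        · have hbj := cZ_succ_sub j
          split_ifs at hbj <;> omega
        · rw [qvert_eq, qvert_eq]; push_cast; ring
  · intro e he
    induction e using Sym2.ind with
    | _ x y =>
    rw [mem_edgeSet] at he
    obtain ⟨hxy, r, hr, hsub⟩ := he
    set d : ℕ := r.natAbs with hd
    have hd1 : 1 ≤ d := by
      rcases Nat.eq_zero_or_pos d with h0 | h0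
      · exfalso
        have : r = 0 := by omega
        apply hxy
        have : x - y = 0 := by rw [hsub, this]; simp
        linear_combination this
      · exact h0
    set j : ℕ := d - 1 with hjdef
    have hjk : j < k := by omega
    have hjd : j + 1 = d := by omega
    -- the "low" endpoint a, with the other endpoint a + d
    have key : ∃ a : ZMod n, s(x, y) = s(a, a + ((d:ℕ) : ZMod n)) := by
      rcases le_or_gt 0 r with hr0 | hr0
      · refine ⟨y, ?_⟩
        have hrd : (r : ZMod n) = ((d:ℕ) : ZMod n) := by
          have : r = (d : ℤ) := by omega
          rw [this]; push_cast; ring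
        have hx : x = y + ((d:ℕ) : ZMod n) := by
          rw [← hrd]; linear_combination hsub
        rw [hx, Sym2.eq_swap]
      · refine ⟨x, ?_⟩
        have hrd : (r : ZMod n) = -((d:ℕ) : ZMod n) := by
          have : r = -(d : ℤ) := by omega
          rw [this]; push_cast; ring
        have hy : y = x + ((d:ℕ) : ZMod n) := by
          rw [hrd] at hsub; linear_combination -hsub
        rw [hy]
    obtain ⟨a, ha⟩ := key
    have hbj := cZ_succ_sub j
    -- choose the starting vertex i₀
    set i₀ : ZMod n := (if j % 2 = 0 then a else a + ((d:ℕ) : ZMod n)) - ((cZ j : ℤ) : ZMod n)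
      with hi₀
    have hwitness : s(x, y) = s(qvert n i₀ j, qvert n i₀ (j + 1)) := by
      rw [ha, qvert_eq, qvert_eq]
      by_cases hpar : j % 2 = 0
      · rw [if_pos hpar] at hbj
        have e1 : i₀ + ((cZ j : ℤ) : ZMod n) = a := by rw [hi₀, if_pos hpar]; ring
        have e2 : i₀ + ((cZ (j+1) : ℤ) : ZMod n) = a + ((d:ℕ) : ZMod n) := by
          have : ((cZ (j+1) : ℤ) : ZMod n) = ((cZ j : ℤ) : ZMod n) + ((d:ℕ) : ZMod n) := by
            have : cZ (j+1) = cZ j + (d : ℤ) := by omega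
            rw [this]; push_cast; ring
          rw [this, hi₀, if_pos hpar]; ring
        rw [e1, e2]
      · rw [if_neg hpar] at hbj
        have e1 : i₀ + ((cZ j : ℤ) : ZMod n) = a + ((d:ℕ) : ZMod n) := by
          rw [hi₀, if_neg hpar]; ring
        have e2 : i₀ + ((cZ (j+1) : ℤ) : ZMod n) = a := by
          have : ((cZ (j+1) : ℤ) : ZMod n) = ((cZ j : ℤ) : ZMod n) - ((d:ℕ) : ZMod n) := by
            have : cZ (j+1) = cZ j - (d : ℤ) := by omega
            rw [this]; push_cast; ring
          rw [this, hi₀, if_neg hpar]; ring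
        rw [e1, e2, Sym2.eq_swap]
    refine ⟨(i₀, j), ⟨hjk, hwitness⟩, ?_⟩
    rintro ⟨i', j'⟩ ⟨hj', heq⟩
    have := huniq i' i₀ j' j hj' hjk (by rw [← heq, ← hwitness])
    simp [this.1, this.2]
end

section
/- Every 5-regular graph G that contains a spanning Cayley graph X(Γ, {g,-g,r,-r}) where {g,r} is a simple commutative generator satisfying 2g+2r = 0 and 2g-2r = 0, admits an M_{g,r}-centered P_5-decomposition, where M_{g,r} = E(G) \ E(X). -/
open SimpleGraph

/-- The Cayley graph `X(Γ, S)`. -/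
def cayleyGraph {Γ : Type*} [AddGroup Γ] (S : Set Γ) : SimpleGraph Γ where
  Adj x y := x ≠ y ∧ (y - x ∈ S ∨ x - y ∈ S)
  symm := by constructor; rintro x y ⟨h, h'⟩; exact ⟨h.symm, h'.symm⟩
  loopless := by constructor; rintro x ⟨h, -⟩; exact h rfl

open Classical

namespace Stmt12

structure Ctx (Γ : Type*) [AddGroup Γ] where
  g : Γ
  r : Γ
  hg0 : g ≠ 0
  hr0 : r ≠ 0
  h2g0 : g + g ≠ 0
  h2r0 : r + r ≠ 0
  hgr : g ≠ r
  hgnr : g ≠ -r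
  hcomm : g + r = r + g
  h1 : g + g + (r + r) = 0
  h2 : g + g - (r + r) = 0

lemma assoc4 {Γ : Type*} [AddGroup Γ] (a b c d : Γ) :
    (a + b) + (c + d) = a + (b + c) + d := by
  rw [add_assoc a b, ← add_assoc b c d, ← add_assoc]

lemma mid_swap {Γ : Type*} [AddGroup Γ] {b c : Γ} (h : AddCommute b c) (a d : Γ) :
    (a + b) + (c + d) = (a + c) + (b + d) := by
  rw [assoc4, h.eq, ← assoc4]

namespace Ctx

variable {Γ : Type*} [AddGroup Γ] (C : Ctx Γ)

def t : Γ := -C.g + C.r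

lemma hcgr : AddCommute C.g C.r := C.hcomm

lemma hct : AddCommute C.g C.t := ((AddCommute.refl C.g).neg_right).add_right C.hcgr

lemma rr_eq : C.r + C.r = C.g + C.g := by
  have h := C.h2; rw [sub_eq_zero] at h; exact h.symm

lemma tt : C.t + C.t = 0 := by
  show (-C.g + C.r) + (-C.g + C.r) = 0
  rw [mid_swap (C.hcgr.symm.neg_right), C.rr_eq, ← neg_add_rev, neg_add_cancel]

lemma g4 : C.g + C.g + (C.g + C.g) = 0 := by
  have h := C.h1; rwa [C.rr_eq] at h

def φ (i : ZMod 4) (j : ZMod 2) : Γ := i.val • C.g + j.val • C.t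

lemma nsmul_g4 : (4 : ℕ) • C.g = 0 := by
  rw [show (4:ℕ) = 2 * 2 from rfl, mul_nsmul, two_nsmul, two_nsmul, C.g4]

lemma nsmul_t2 : (2 : ℕ) • C.t = 0 := by rw [two_nsmul, C.tt]

lemma nsmul_g_mod (k : ℕ) : k • C.g = (k % 4) • C.g := by
  conv_lhs => rw [← Nat.div_add_mod k 4]
  rw [add_nsmul, mul_nsmul, C.nsmul_g4, smul_zero, zero_add]

lemma nsmul_t_mod (k : ℕ) : k • C.t = (k % 2) • C.t := by
  conv_lhs => rw [← Nat.div_add_mod k 2]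
  rw [add_nsmul, mul_nsmul, C.nsmul_t2, smul_zero, zero_add]

lemma φ_add (i i' : ZMod 4) (j j' : ZMod 2) :
    C.φ i j + C.φ i' j' = C.φ (i + i') (j + j') := by
  show (i.val • C.g + j.val • C.t) + (i'.val • C.g + j'.val • C.t) = _
  rw [mid_swap ((C.hct.symm).nsmul_nsmul j.val i'.val), ← add_nsmul, ← add_nsmul,
    C.nsmul_g_mod (i.val + i'.val), C.nsmul_t_mod (j.val + j'.val)]
  rw [φ, ZMod.val_add, ZMod.val_add]

lemma φ_zero : C.φ 0 0 = 0 := by simp [φ]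

lemma φ_g : C.φ 1 0 = C.g := by simp [φ, show ((1 : ZMod 4)).val = 1 from rfl]

lemma φ_t : C.φ 0 1 = C.t := by simp [φ, show ((1 : ZMod 2)).val = 1 from rfl]

lemma φ_r : C.φ 1 1 = C.r := by
  show (1 : ZMod 4).val • C.g + (1 : ZMod 2).val • C.t = C.r
  rw [show ((1 : ZMod 4)).val = 1 from rfl, show ((1 : ZMod 2)).val = 1 from rfl,
    one_nsmul, one_nsmul, t, add_neg_cancel_left]

lemma φ_z : C.φ 2 0 = C.g + C.g := by
  show (2 : ZMod 4).val • C.g + (0 : ZMod 2).val • C.t = _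
  rw [show ((2 : ZMod 4)).val = 2 from rfl, show ((0 : ZMod 2)).val = 0 from rfl,
    two_nsmul, zero_nsmul, add_zero]

lemma φ_ng : C.φ 3 0 = -C.g := by
  have h := C.φ_add 1 3 0 0
  rw [φ_g, show (1 + 3 : ZMod 4) = 0 from rfl, show (0 + 0 : ZMod 2) = 0 from rfl, φ_zero] at h
  exact (neg_eq_of_add_eq_zero_right h).symm

lemma φ_nr : C.φ 3 1 = -C.r := by
  have h := C.φ_add 1 3 1 1
  rw [φ_r, show (1 + 3 : ZMod 4) = 0 from rfl, show (1 + 1 : ZMod 2) = 0 from rfl, φ_zero] at h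
  exact (neg_eq_of_add_eq_zero_right h).symm

lemma φ_s : C.φ 2 1 = C.g + C.r := by
  have h := C.φ_add 2 0 0 1
  rw [φ_z, φ_t, show (2 + 0 : ZMod 4) = 2 from rfl, show (0 + 1 : ZMod 2) = 1 from rfl] at h
  rw [← h, t, add_assoc, add_neg_cancel_left]

lemma t_ne_zero : C.t ≠ 0 := fun h => C.hgr (neg_add_eq_zero.mp h)

lemma s_ne_zero : C.g + C.r ≠ 0 := fun h => C.hgnr (eq_neg_of_add_eq_zero_left h)

lemma zmod4_cases : ∀ x : ZMod 4, x = 0 ∨ x = 1 ∨ x = 2 ∨ x = 3 := by decide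

lemma zmod2_cases : ∀ x : ZMod 2, x = 0 ∨ x = 1 := by decide

lemma φ_ne_zero {i : ZMod 4} {j : ZMod 2} (h : ¬(i = 0 ∧ j = 0)) : C.φ i j ≠ 0 := by
  rcases zmod4_cases i with rfl | rfl | rfl | rfl <;> rcases zmod2_cases j with rfl | rfl
  · exact absurd ⟨rfl, rfl⟩ h
  · rw [φ_t]; exact C.t_ne_zero
  · rw [φ_g]; exact C.hg0
  · rw [φ_r]; exact C.hr0
  · rw [φ_z]; exact C.h2g0
  · rw [φ_s]; exact C.s_ne_zero
  · rw [φ_ng]; exact neg_ne_zero.mpr C.hg0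
  · rw [φ_nr]; exact neg_ne_zero.mpr C.hr0

lemma φ_inj {i i' : ZMod 4} {j j' : ZMod 2} (h : C.φ i j = C.φ i' j') : i = i' ∧ j = j' := by
  by_contra hc
  have h0 : C.φ (i + -i') (j + -j') ≠ 0 := by
    apply C.φ_ne_zero
    rintro ⟨h1, h2⟩
    exact hc ⟨by rwa [add_neg_eq_zero] at h1, by rwa [add_neg_eq_zero] at h2⟩
  apply h0
  have h2 := C.φ_add i' (-i') j' (-j')
  rw [add_neg_cancel, add_neg_cancel, φ_zero] at h2
  rw [← C.φ_add, h]
  exact h2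

lemma φ_eq_iff {i i' : ZMod 4} {j j' : ZMod 2} : C.φ i j = C.φ i' j' ↔ (i = i' ∧ j = j') := by
  constructor
  · exact C.φ_inj
  · rintro ⟨rfl, rfl⟩; rfl

-- ## Layer 2: subgroup, coset representatives, sign functions

/-- short names -/
def S : Γ := C.φ 2 1
def T : Γ := C.φ 0 1
def Z : Γ := C.φ 2 0

/-- The subgroup generated by `g` and `r` (as an explicit range). -/
def H : AddSubgroup Γ where
  carrier := Set.range (fun p : ZMod 4 × ZMod 2 => C.φ p.1 p.2)
  zero_mem' := ⟨(0, 0), C.φ_zero⟩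
  add_mem' := by
    rintro x y ⟨⟨i, j⟩, rfl⟩ ⟨⟨i', j'⟩, rfl⟩
    exact ⟨(i + i', j + j'), (C.φ_add i i' j j').symm⟩
  neg_mem' := by
    rintro x ⟨⟨i, j⟩, rfl⟩
    refine ⟨(-i, -j), ?_⟩
    have h2 := C.φ_add i (-i) j (-j)
    rw [add_neg_cancel, add_neg_cancel, φ_zero] at h2
    show C.φ (-i) (-j) = -(C.φ i j)
    exact eq_neg_of_add_eq_zero_right h2

noncomputable def ρ : Γ → Γ := fun u => (Quotient.mk (QuotientAddGroup.rightRel C.H) u).out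

lemma hh_mem (u : Γ) : ∃ i j, u - C.ρ u = C.φ i j := by
  have h := Quotient.mk_out (s := QuotientAddGroup.rightRel C.H) u
  rw [QuotientAddGroup.rightRel_apply] at h
  obtain ⟨⟨i, j⟩, hij⟩ := h
  exact ⟨i, j, by rw [sub_eq_add_neg]; exact hij.symm⟩

lemma ρ_shift (i : ZMod 4) (j : ZMod 2) (u : Γ) : C.ρ (C.φ i j + u) = C.ρ u := by
  unfold ρ
  congr 1
  apply Quotient.sound
  apply (QuotientAddGroup.rightRel_apply).mpr
  have heq : u + -(C.φ i j + u) = -(C.φ i j) := by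
    rw [neg_add_rev, ← add_assoc, add_neg_cancel, zero_add]
  rw [heq]
  exact C.H.neg_mem ⟨(i, j), rfl⟩


/-- The "diagonal has an s-matched vertex" predicate. -/
def Dp (m : Γ → Γ) (u : Γ) : Prop :=
  ∃ (i : ZMod 4) (j : ZMod 2), m (C.φ (2*i) j + u) = C.S + (C.φ (2*i) j + u)

lemma φφ (i i' : ZMod 4) (j j' : ZMod 2) (x : Γ) :
    C.φ i j + (C.φ i' j' + x) = C.φ (i + i') (j + j') + x := by
  rw [← add_assoc, C.φ_add]

lemma Dp_shift (m : Γ → Γ) (i₀ : ZMod 4) (j₀ : ZMod 2) (u : Γ) :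
    C.Dp m (C.φ (2*i₀) j₀ + u) ↔ C.Dp m u := by
  constructor
  · rintro ⟨i, j, h⟩
    refine ⟨i + i₀, j + j₀, ?_⟩
    rw [φφ, show 2*i + 2*i₀ = 2*(i+i₀) by ring] at h
    exact h
  · rintro ⟨i, j, h⟩
    refine ⟨i - i₀, j - j₀, ?_⟩
    rw [φφ, show 2*(i-i₀) + 2*i₀ = 2*i by ring, show j - j₀ + j₀ = j by ring]
    exact h

lemma Dp_S (m : Γ → Γ) (u : Γ) : C.Dp m (C.S + u) ↔ C.Dp m u := by
  have := C.Dp_shift m 1 1 u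
  rwa [show (2*1 : ZMod 4) = 2 from rfl] at this

lemma Dp_T (m : Γ → Γ) (u : Γ) : C.Dp m (C.T + u) ↔ C.Dp m u := by
  have := C.Dp_shift m 0 1 u
  rwa [show (2*0 : ZMod 4) = 0 from rfl] at this

lemma Dp_Z (m : Γ → Γ) (u : Γ) : C.Dp m (C.Z + u) ↔ C.Dp m u := by
  have := C.Dp_shift m 1 0 u
  rwa [show (2*1 : ZMod 4) = 2 from rfl] at this

lemma Dp_of_s (m : Γ → Γ) (u : Γ) (h : m u = C.S + u) : C.Dp m u :=
  ⟨0, 0, by rw [show (2*0 : ZMod 4) = 0 from rfl, φ_zero, zero_add]; exact h⟩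

omit [AddGroup Γ] in
lemma m_inj {m : Γ → Γ} (hm_inv : ∀ a, m (m a) = a) {a b : Γ} (h : m a = m b) : a = b := by
  have := congrArg m h
  rwa [hm_inv, hm_inv] at this

/-- Conflict lemma: a `t`-matched vertex is never on an `s`-diagonal. -/
lemma conflict {m : Γ → Γ} (hm_inv : ∀ a, m (m a) = a) (u : Γ)
    (hmu : m u = C.T + u) : ¬ C.Dp m u := by
  rintro ⟨i, j, hij⟩
  have hST : C.S ≠ C.T := by
    intro h
    exact absurd (C.φ_inj h).1 (by decide)
  have h2i : 2*i = 0 ∨ 2*i = 2 := by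
    rcases zmod4_cases i with rfl | rfl | rfl | rfl <;> [left; right; left; right] <;> decide
  rcases h2i with h2 | h2 <;> rw [h2] at hij <;> rcases zmod2_cases j with rfl | rfl
  · -- k = 0
    rw [φ_zero, zero_add] at hij
    exact hST (add_right_cancel (hij.symm.trans hmu))
  · -- k = T
    have hmTu : m (C.T + u) = u := by
      rw [← hmu, hm_inv]
    rw [show C.φ 0 1 = C.T from rfl, hmTu] at hij
    -- u = S + (T + u) = Z + u
    rw [show C.S + (C.T + u) = C.φ (2+0) (1+1) + u from by rw [← φφ]; rfl] at hij
    have : C.φ 2 0 = 0 := by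
      have := hij
      rw [show ((2+0 : ZMod 4)) = 2 from rfl, show ((1+1 : ZMod 2)) = 0 from rfl] at this
      have h0 : (0 : Γ) + u = C.φ 2 0 + u := by rw [zero_add]; exact this
      exact (add_right_cancel h0).symm
    exact C.φ_ne_zero (by decide) this
  · -- k = Z
    rw [show C.φ 2 0 = C.Z from rfl] at hij
    rw [show C.S + (C.Z + u) = C.φ (2+2) (1+0) + u from by rw [← φφ]; rfl,
      show ((2+2 : ZMod 4)) = 0 from rfl, show ((1+0 : ZMod 2)) = 1 from rfl,
      show C.φ 0 1 = C.T from rfl, ← hmu] at hij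
    have := m_inj hm_inv hij
    have h0 : (0 : Γ) + u = C.Z + u := by rw [zero_add]; exact this.symm
    exact C.φ_ne_zero (i := 2) (j := 0) (by decide) (add_right_cancel h0).symm
  · -- k = S
    rw [show C.φ 2 1 = C.S from rfl] at hij
    rw [show C.S + (C.S + u) = C.φ (2+2) (1+1) + u from by rw [← φφ]; rfl,
      show ((2+2 : ZMod 4)) = 0 from rfl, show ((1+1 : ZMod 2)) = 0 from rfl,
      φ_zero, zero_add] at hij
    have h3 := congrArg m hij
    rw [hm_inv] at h3
    exact hST (add_right_cancel (h3.trans hmu))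

-- ## Layer 3: the sign functions

def π (i : ZMod 4) : ZMod 2 := (i.val : ZMod 2)

def Pg (u : Γ) : Prop := ∃ i, u - C.ρ u = C.φ i 0

def Pr (u : Γ) : Prop := ∃ i, u - C.ρ u = C.φ i (π i)

open Classical in
noncomputable def eg (m : Γ → Γ) (u : Γ) : Γ :=
  if C.Pg u then C.g else
    (if (C.Dp m (C.ρ u) ↔ C.Dp m (C.g + C.ρ u)) then C.g else -C.g)

open Classical in
noncomputable def sr (m : Γ → Γ) (u : Γ) : Γ :=
  if (if C.Pr u then C.Dp m (C.ρ u) else C.Dp m (C.g + C.ρ u)) then -C.r else C.r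

lemma eg_cases (m : Γ → Γ) (u : Γ) : C.eg m u = C.g ∨ C.eg m u = -C.g := by
  unfold eg; split_ifs <;> simp

lemma sr_cases (m : Γ → Γ) (u : Γ) : C.sr m u = C.r ∨ C.sr m u = -C.r := by
  unfold sr; split_ifs <;> simp

lemma φ_neg (i : ZMod 4) (j : ZMod 2) : -(C.φ i j) = C.φ (-i) (-j) := by
  have h2 := C.φ_add i (-i) j (-j)
  rw [add_neg_cancel, add_neg_cancel, φ_zero] at h2
  exact (eq_neg_of_add_eq_zero_right h2).symm

lemma hh_shift (i : ZMod 4) (j : ZMod 2) (u : Γ) :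
    (C.φ i j + u) - C.ρ (C.φ i j + u) = C.φ i j + (u - C.ρ u) := by
  rw [C.ρ_shift, add_sub_assoc]

lemma Pg_shift (i : ZMod 4) (u : Γ) : C.Pg (C.φ i 0 + u) ↔ C.Pg u := by
  constructor
  · rintro ⟨i', h⟩
    rw [C.hh_shift] at h
    refine ⟨-i + i', ?_⟩
    have h2 : u - C.ρ u = -(C.φ i 0) + C.φ i' 0 := by
      rw [← h, neg_add_cancel_left]
    rw [h2, C.φ_neg, C.φ_add, show (-(0:ZMod 2) + 0) = 0 from by decide]
  · rintro ⟨i', h⟩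
    exact ⟨i + i', by rw [C.hh_shift, h, C.φ_add, show ((0:ZMod 2) + 0) = 0 from by decide]⟩

lemma Pr_shift (i : ZMod 4) (u : Γ) : C.Pr (C.φ i (π i) + u) ↔ C.Pr u := by
  have hπ : ∀ a b : ZMod 4, π a + π b = π (a + b) := by decide
  have hπn : ∀ a : ZMod 4, -(π a) = π (-a) := by decide
  constructor
  · rintro ⟨i', h⟩
    rw [C.hh_shift] at h
    refine ⟨-i + i', ?_⟩
    have h2 : u - C.ρ u = -(C.φ i (π i)) + C.φ i' (π i') := by
      rw [← h, neg_add_cancel_left]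
    rw [h2, C.φ_neg, C.φ_add, hπn, hπ]
  · rintro ⟨i', h⟩
    exact ⟨i + i', by rw [C.hh_shift, h, C.φ_add, hπ]⟩

lemma eg_shift (m : Γ → Γ) (u : Γ) : C.eg m (C.g + u) = C.eg m u := by
  unfold eg
  have h1 : C.ρ (C.g + u) = C.ρ u := by rw [← C.φ_g, C.ρ_shift]
  rw [h1]
  exact if_congr (by rw [← C.φ_g]; exact C.Pg_shift 1 u) rfl rfl

lemma sr_shift (m : Γ → Γ) (u : Γ) : C.sr m (C.r + u) = C.sr m u := by
  unfold sr
  have h1 : C.ρ (C.r + u) = C.ρ u := by rw [← C.φ_r, C.ρ_shift]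
  rw [h1]
  refine if_congr (iff_of_eq (if_congr ?_ rfl rfl)) rfl rfl
  have h2 : C.φ 1 (π 1) = C.r := by rw [show π 1 = 1 from rfl, C.φ_r]
  rw [← h2]
  exact C.Pr_shift 1 u

lemma add_rg : C.r + C.g = C.S := by
  have h := C.φ_add 1 1 1 0
  rw [φ_r, φ_g] at h
  rw [h]; exact C.φ_eq_iff.mpr ⟨by decide, by decide⟩

lemma add_nrg : -C.r + C.g = C.T := by
  have h := C.φ_add 3 1 1 0
  rw [φ_nr, φ_g] at h
  rw [h]; exact C.φ_eq_iff.mpr ⟨by decide, by decide⟩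

lemma add_rng : C.r + -C.g = C.T := by
  have h := C.φ_add 1 3 1 0
  rw [φ_r, φ_ng] at h
  rw [h]; exact C.φ_eq_iff.mpr ⟨by decide, by decide⟩

lemma add_nrng : -C.r + -C.g = C.S := by
  have h := C.φ_add 3 3 1 0
  rw [φ_nr, φ_ng] at h
  rw [h]; exact C.φ_eq_iff.mpr ⟨by decide, by decide⟩

lemma L5s (m : Γ → Γ) (u : Γ) (h : m u = C.S + u) :
    C.sr m u + C.eg m u = C.T := by
  obtain ⟨i, j, hij⟩ := C.hh_mem u
  rcases zmod4_cases i with rfl | rfl | rfl | rfl <;> rcases zmod2_cases j with rfl | rfl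
  next =>
    have hu : C.φ 0 0 + C.ρ u = u := by rw [← hij, sub_add_cancel]
    have hDp : C.Dp m u ↔ C.Dp m (C.ρ u) := by
      conv_lhs => rw [← hu, C.φ_zero, zero_add]
    have hPg : C.Pg u := ⟨0, hij⟩
    have hPr : C.Pr u := ⟨0, by rw [hij]; exact (C.φ_eq_iff.mpr ⟨rfl, by decide⟩).symm⟩
    have hd : C.Dp m (C.ρ u) := hDp.mp (C.Dp_of_s m u h)
    have hEg : C.eg m u = C.g := by unfold eg; simp only [hPg, ite_true]
    have hSr : C.sr m u = -C.r := by unfold sr; simp only [hPg, hPr, hd, ite_true, ite_false]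
    rw [hSr, hEg]; exact C.add_nrg
  next =>
    have hu : C.φ 0 1 + C.ρ u = u := by rw [← hij, sub_add_cancel]
    have hDp : C.Dp m u ↔ C.Dp m (C.ρ u) := by
      conv_lhs => rw [← hu]
      exact C.Dp_T m (C.ρ u)
    have hPg : ¬ C.Pg u := by
      rintro ⟨i', h'⟩
      exact absurd (C.φ_inj (h'.symm.trans hij)).2 (by decide)
    have hPr : ¬ C.Pr u := by
      rintro ⟨i', h'⟩
      obtain ⟨h1, h2⟩ := C.φ_inj (h'.symm.trans hij)
      subst h1
      exact absurd h2 (by decide)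
    have hd : C.Dp m (C.ρ u) := hDp.mp (C.Dp_of_s m u h)
    by_cases hf : C.Dp m (C.g + C.ρ u)
    · have hEg : C.eg m u = C.g := by unfold eg; simp [hPg, hd, hf]
      have hSr : C.sr m u = -C.r := by unfold sr; simp only [hPr, hd, hf, ite_true, ite_false]
      rw [hSr, hEg]; exact C.add_nrg
    · have hEg : C.eg m u = -C.g := by unfold eg; simp [hPg, hd, hf]
      have hSr : C.sr m u = C.r := by unfold sr; simp only [hPr, hd, hf, ite_true, ite_false]
      rw [hSr, hEg]; exact C.add_rng
  next =>
    have hu : C.φ 1 0 + C.ρ u = u := by rw [← hij, sub_add_cancel]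
    have hDp : C.Dp m u ↔ C.Dp m (C.g + C.ρ u) := by
      conv_lhs => rw [← hu, C.φ_g]
    have hPg : C.Pg u := ⟨1, hij⟩
    have hPr : ¬ C.Pr u := by
      rintro ⟨i', h'⟩
      obtain ⟨h1, h2⟩ := C.φ_inj (h'.symm.trans hij)
      subst h1
      exact absurd h2 (by decide)
    have hd : C.Dp m (C.g + C.ρ u) := hDp.mp (C.Dp_of_s m u h)
    have hEg : C.eg m u = C.g := by unfold eg; simp only [hPg, ite_true]
    have hSr : C.sr m u = -C.r := by unfold sr; simp only [hPg, hPr, hd, ite_true, ite_false]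
    rw [hSr, hEg]; exact C.add_nrg
  next =>
    have hu : C.φ 1 1 + C.ρ u = u := by rw [← hij, sub_add_cancel]
    have hDp : C.Dp m u ↔ C.Dp m (C.g + C.ρ u) := by
      have e : C.φ 0 1 + (C.φ 1 0 + C.ρ u) = C.φ 1 1 + C.ρ u := by rw [C.φφ]; rfl
      conv_lhs => rw [← hu, ← e]
      rw [← C.φ_g]
      exact C.Dp_T m _
    have hPg : ¬ C.Pg u := by
      rintro ⟨i', h'⟩
      exact absurd (C.φ_inj (h'.symm.trans hij)).2 (by decide)
    have hPr : C.Pr u := ⟨1, by rw [hij]; exact (C.φ_eq_iff.mpr ⟨rfl, by decide⟩).symm⟩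
    have hd : C.Dp m (C.g + C.ρ u) := hDp.mp (C.Dp_of_s m u h)
    by_cases hf : C.Dp m (C.ρ u)
    · have hEg : C.eg m u = C.g := by unfold eg; simp [hPg, hd, hf]
      have hSr : C.sr m u = -C.r := by unfold sr; simp only [hPr, hd, hf, ite_true, ite_false]
      rw [hSr, hEg]; exact C.add_nrg
    · have hEg : C.eg m u = -C.g := by unfold eg; simp [hPg, hd, hf]
      have hSr : C.sr m u = C.r := by unfold sr; simp only [hPr, hd, hf, ite_true, ite_false]
      rw [hSr, hEg]; exact C.add_rng
  next =>
    have hu : C.φ 2 0 + C.ρ u = u := by rw [← hij, sub_add_cancel]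
    have hDp : C.Dp m u ↔ C.Dp m (C.ρ u) := by
      conv_lhs => rw [← hu]
      exact C.Dp_Z m (C.ρ u)
    have hPg : C.Pg u := ⟨2, hij⟩
    have hPr : C.Pr u := ⟨2, by rw [hij]; exact (C.φ_eq_iff.mpr ⟨rfl, by decide⟩).symm⟩
    have hd : C.Dp m (C.ρ u) := hDp.mp (C.Dp_of_s m u h)
    have hEg : C.eg m u = C.g := by unfold eg; simp only [hPg, ite_true]
    have hSr : C.sr m u = -C.r := by unfold sr; simp only [hPg, hPr, hd, ite_true, ite_false]
    rw [hSr, hEg]; exact C.add_nrg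
  next =>
    have hu : C.φ 2 1 + C.ρ u = u := by rw [← hij, sub_add_cancel]
    have hDp : C.Dp m u ↔ C.Dp m (C.ρ u) := by
      conv_lhs => rw [← hu]
      exact C.Dp_S m (C.ρ u)
    have hPg : ¬ C.Pg u := by
      rintro ⟨i', h'⟩
      exact absurd (C.φ_inj (h'.symm.trans hij)).2 (by decide)
    have hPr : ¬ C.Pr u := by
      rintro ⟨i', h'⟩
      obtain ⟨h1, h2⟩ := C.φ_inj (h'.symm.trans hij)
      subst h1
      exact absurd h2 (by decide)
    have hd : C.Dp m (C.ρ u) := hDp.mp (C.Dp_of_s m u h)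
    by_cases hf : C.Dp m (C.g + C.ρ u)
    · have hEg : C.eg m u = C.g := by unfold eg; simp [hPg, hd, hf]
      have hSr : C.sr m u = -C.r := by unfold sr; simp only [hPr, hd, hf, ite_true, ite_false]
      rw [hSr, hEg]; exact C.add_nrg
    · have hEg : C.eg m u = -C.g := by unfold eg; simp [hPg, hd, hf]
      have hSr : C.sr m u = C.r := by unfold sr; simp only [hPr, hd, hf, ite_true, ite_false]
      rw [hSr, hEg]; exact C.add_rng
  next =>
    have hu : C.φ 3 0 + C.ρ u = u := by rw [← hij, sub_add_cancel]
    have hDp : C.Dp m u ↔ C.Dp m (C.g + C.ρ u) := by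
      have e : C.φ 2 0 + (C.φ 1 0 + C.ρ u) = C.φ 3 0 + C.ρ u := by rw [C.φφ]; rfl
      conv_lhs => rw [← hu, ← e]
      rw [← C.φ_g]
      exact C.Dp_Z m _
    have hPg : C.Pg u := ⟨3, hij⟩
    have hPr : ¬ C.Pr u := by
      rintro ⟨i', h'⟩
      obtain ⟨h1, h2⟩ := C.φ_inj (h'.symm.trans hij)
      subst h1
      exact absurd h2 (by decide)
    have hd : C.Dp m (C.g + C.ρ u) := hDp.mp (C.Dp_of_s m u h)
    have hEg : C.eg m u = C.g := by unfold eg; simp only [hPg, ite_true]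
    have hSr : C.sr m u = -C.r := by unfold sr; simp only [hPg, hPr, hd, ite_true, ite_false]
    rw [hSr, hEg]; exact C.add_nrg
  next =>
    have hu : C.φ 3 1 + C.ρ u = u := by rw [← hij, sub_add_cancel]
    have hDp : C.Dp m u ↔ C.Dp m (C.g + C.ρ u) := by
      have e : C.φ 2 1 + (C.φ 1 0 + C.ρ u) = C.φ 3 1 + C.ρ u := by rw [C.φφ]; rfl
      conv_lhs => rw [← hu, ← e]
      rw [← C.φ_g]
      exact C.Dp_S m _
    have hPg : ¬ C.Pg u := by
      rintro ⟨i', h'⟩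
      exact absurd (C.φ_inj (h'.symm.trans hij)).2 (by decide)
    have hPr : C.Pr u := ⟨3, by rw [hij]; exact (C.φ_eq_iff.mpr ⟨rfl, by decide⟩).symm⟩
    have hd : C.Dp m (C.g + C.ρ u) := hDp.mp (C.Dp_of_s m u h)
    by_cases hf : C.Dp m (C.ρ u)
    · have hEg : C.eg m u = C.g := by unfold eg; simp [hPg, hd, hf]
      have hSr : C.sr m u = -C.r := by unfold sr; simp only [hPr, hd, hf, ite_true, ite_false]
      rw [hSr, hEg]; exact C.add_nrg
    · have hEg : C.eg m u = -C.g := by unfold eg; simp [hPg, hd, hf]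
      have hSr : C.sr m u = C.r := by unfold sr; simp only [hPr, hd, hf, ite_true, ite_false]
      rw [hSr, hEg]; exact C.add_rng

lemma L5t (m : Γ → Γ) (hm_inv : ∀ a, m (m a) = a) (u : Γ) (h : m u = C.T + u) :
    C.sr m u + C.eg m u = C.S := by
  obtain ⟨i, j, hij⟩ := C.hh_mem u
  rcases zmod4_cases i with rfl | rfl | rfl | rfl <;> rcases zmod2_cases j with rfl | rfl
  next =>
    have hu : C.φ 0 0 + C.ρ u = u := by rw [← hij, sub_add_cancel]
    have hDp : C.Dp m u ↔ C.Dp m (C.ρ u) := by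
      conv_lhs => rw [← hu, C.φ_zero, zero_add]
    have hPg : C.Pg u := ⟨0, hij⟩
    have hPr : C.Pr u := ⟨0, by rw [hij]; exact (C.φ_eq_iff.mpr ⟨rfl, by decide⟩).symm⟩
    have hd : ¬ C.Dp m (C.ρ u) := fun x => (C.conflict hm_inv u h) (hDp.mpr x)
    have hEg : C.eg m u = C.g := by unfold eg; simp only [hPg, ite_true]
    have hSr : C.sr m u = C.r := by unfold sr; simp only [hPg, hPr, hd, ite_true, ite_false]
    rw [hSr, hEg]; exact C.add_rg
  next =>
    have hu : C.φ 0 1 + C.ρ u = u := by rw [← hij, sub_add_cancel]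
    have hDp : C.Dp m u ↔ C.Dp m (C.ρ u) := by
      conv_lhs => rw [← hu]
      exact C.Dp_T m (C.ρ u)
    have hPg : ¬ C.Pg u := by
      rintro ⟨i', h'⟩
      exact absurd (C.φ_inj (h'.symm.trans hij)).2 (by decide)
    have hPr : ¬ C.Pr u := by
      rintro ⟨i', h'⟩
      obtain ⟨h1, h2⟩ := C.φ_inj (h'.symm.trans hij)
      subst h1
      exact absurd h2 (by decide)
    have hd : ¬ C.Dp m (C.ρ u) := fun x => (C.conflict hm_inv u h) (hDp.mpr x)
    by_cases hf : C.Dp m (C.g + C.ρ u)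
    · have hEg : C.eg m u = -C.g := by unfold eg; simp [hPg, hd, hf]
      have hSr : C.sr m u = -C.r := by unfold sr; simp only [hPr, hd, hf, ite_true, ite_false]
      rw [hSr, hEg]; exact C.add_nrng
    · have hEg : C.eg m u = C.g := by unfold eg; simp [hPg, hd, hf]
      have hSr : C.sr m u = C.r := by unfold sr; simp only [hPr, hd, hf, ite_true, ite_false]
      rw [hSr, hEg]; exact C.add_rg
  next =>
    have hu : C.φ 1 0 + C.ρ u = u := by rw [← hij, sub_add_cancel]
    have hDp : C.Dp m u ↔ C.Dp m (C.g + C.ρ u) := by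
      conv_lhs => rw [← hu, C.φ_g]
    have hPg : C.Pg u := ⟨1, hij⟩
    have hPr : ¬ C.Pr u := by
      rintro ⟨i', h'⟩
      obtain ⟨h1, h2⟩ := C.φ_inj (h'.symm.trans hij)
      subst h1
      exact absurd h2 (by decide)
    have hd : ¬ C.Dp m (C.g + C.ρ u) := fun x => (C.conflict hm_inv u h) (hDp.mpr x)
    have hEg : C.eg m u = C.g := by unfold eg; simp only [hPg, ite_true]
    have hSr : C.sr m u = C.r := by unfold sr; simp only [hPg, hPr, hd, ite_true, ite_false]
    rw [hSr, hEg]; exact C.add_rg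
  next =>
    have hu : C.φ 1 1 + C.ρ u = u := by rw [← hij, sub_add_cancel]
    have hDp : C.Dp m u ↔ C.Dp m (C.g + C.ρ u) := by
      have e : C.φ 0 1 + (C.φ 1 0 + C.ρ u) = C.φ 1 1 + C.ρ u := by rw [C.φφ]; rfl
      conv_lhs => rw [← hu, ← e]
      rw [← C.φ_g]
      exact C.Dp_T m _
    have hPg : ¬ C.Pg u := by
      rintro ⟨i', h'⟩
      exact absurd (C.φ_inj (h'.symm.trans hij)).2 (by decide)
    have hPr : C.Pr u := ⟨1, by rw [hij]; exact (C.φ_eq_iff.mpr ⟨rfl, by decide⟩).symm⟩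
    have hd : ¬ C.Dp m (C.g + C.ρ u) := fun x => (C.conflict hm_inv u h) (hDp.mpr x)
    by_cases hf : C.Dp m (C.ρ u)
    · have hEg : C.eg m u = -C.g := by unfold eg; simp [hPg, hd, hf]
      have hSr : C.sr m u = -C.r := by unfold sr; simp only [hPr, hd, hf, ite_true, ite_false]
      rw [hSr, hEg]; exact C.add_nrng
    · have hEg : C.eg m u = C.g := by unfold eg; simp [hPg, hd, hf]
      have hSr : C.sr m u = C.r := by unfold sr; simp only [hPr, hd, hf, ite_true, ite_false]
      rw [hSr, hEg]; exact C.add_rg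
  next =>
    have hu : C.φ 2 0 + C.ρ u = u := by rw [← hij, sub_add_cancel]
    have hDp : C.Dp m u ↔ C.Dp m (C.ρ u) := by
      conv_lhs => rw [← hu]
      exact C.Dp_Z m (C.ρ u)
    have hPg : C.Pg u := ⟨2, hij⟩
    have hPr : C.Pr u := ⟨2, by rw [hij]; exact (C.φ_eq_iff.mpr ⟨rfl, by decide⟩).symm⟩
    have hd : ¬ C.Dp m (C.ρ u) := fun x => (C.conflict hm_inv u h) (hDp.mpr x)
    have hEg : C.eg m u = C.g := by unfold eg; simp only [hPg, ite_true]
    have hSr : C.sr m u = C.r := by unfold sr; simp only [hPg, hPr, hd, ite_true, ite_false]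
    rw [hSr, hEg]; exact C.add_rg
  next =>
    have hu : C.φ 2 1 + C.ρ u = u := by rw [← hij, sub_add_cancel]
    have hDp : C.Dp m u ↔ C.Dp m (C.ρ u) := by
      conv_lhs => rw [← hu]
      exact C.Dp_S m (C.ρ u)
    have hPg : ¬ C.Pg u := by
      rintro ⟨i', h'⟩
      exact absurd (C.φ_inj (h'.symm.trans hij)).2 (by decide)
    have hPr : ¬ C.Pr u := by
      rintro ⟨i', h'⟩
      obtain ⟨h1, h2⟩ := C.φ_inj (h'.symm.trans hij)
      subst h1
      exact absurd h2 (by decide)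
    have hd : ¬ C.Dp m (C.ρ u) := fun x => (C.conflict hm_inv u h) (hDp.mpr x)
    by_cases hf : C.Dp m (C.g + C.ρ u)
    · have hEg : C.eg m u = -C.g := by unfold eg; simp [hPg, hd, hf]
      have hSr : C.sr m u = -C.r := by unfold sr; simp only [hPr, hd, hf, ite_true, ite_false]
      rw [hSr, hEg]; exact C.add_nrng
    · have hEg : C.eg m u = C.g := by unfold eg; simp [hPg, hd, hf]
      have hSr : C.sr m u = C.r := by unfold sr; simp only [hPr, hd, hf, ite_true, ite_false]
      rw [hSr, hEg]; exact C.add_rg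
  next =>
    have hu : C.φ 3 0 + C.ρ u = u := by rw [← hij, sub_add_cancel]
    have hDp : C.Dp m u ↔ C.Dp m (C.g + C.ρ u) := by
      have e : C.φ 2 0 + (C.φ 1 0 + C.ρ u) = C.φ 3 0 + C.ρ u := by rw [C.φφ]; rfl
      conv_lhs => rw [← hu, ← e]
      rw [← C.φ_g]
      exact C.Dp_Z m _
    have hPg : C.Pg u := ⟨3, hij⟩
    have hPr : ¬ C.Pr u := by
      rintro ⟨i', h'⟩
      obtain ⟨h1, h2⟩ := C.φ_inj (h'.symm.trans hij)
      subst h1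
      exact absurd h2 (by decide)
    have hd : ¬ C.Dp m (C.g + C.ρ u) := fun x => (C.conflict hm_inv u h) (hDp.mpr x)
    have hEg : C.eg m u = C.g := by unfold eg; simp only [hPg, ite_true]
    have hSr : C.sr m u = C.r := by unfold sr; simp only [hPg, hPr, hd, ite_true, ite_false]
    rw [hSr, hEg]; exact C.add_rg
  next =>
    have hu : C.φ 3 1 + C.ρ u = u := by rw [← hij, sub_add_cancel]
    have hDp : C.Dp m u ↔ C.Dp m (C.g + C.ρ u) := by
      have e : C.φ 2 1 + (C.φ 1 0 + C.ρ u) = C.φ 3 1 + C.ρ u := by rw [C.φφ]; rfl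
      conv_lhs => rw [← hu, ← e]
      rw [← C.φ_g]
      exact C.Dp_S m _
    have hPg : ¬ C.Pg u := by
      rintro ⟨i', h'⟩
      exact absurd (C.φ_inj (h'.symm.trans hij)).2 (by decide)
    have hPr : C.Pr u := ⟨3, by rw [hij]; exact (C.φ_eq_iff.mpr ⟨rfl, by decide⟩).symm⟩
    have hd : ¬ C.Dp m (C.g + C.ρ u) := fun x => (C.conflict hm_inv u h) (hDp.mpr x)
    by_cases hf : C.Dp m (C.ρ u)
    · have hEg : C.eg m u = -C.g := by unfold eg; simp [hPg, hd, hf]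
      have hSr : C.sr m u = -C.r := by unfold sr; simp only [hPr, hd, hf, ite_true, ite_false]
      rw [hSr, hEg]; exact C.add_nrng
    · have hEg : C.eg m u = C.g := by unfold eg; simp [hPg, hd, hf]
      have hSr : C.sr m u = C.r := by unfold sr; simp only [hPr, hd, hf, ite_true, ite_false]
      rw [hSr, hEg]; exact C.add_rg

-- ## Layer 4: graph-theoretic setup

def X : SimpleGraph Γ := cayleyGraph ({C.g, -C.g, C.r, -C.r} : Set Γ)

lemma sgen_ne_zero {d : Γ} (hd : d ∈ ({C.g, -C.g, C.r, -C.r} : Set Γ)) : d ≠ 0 := by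
  rcases hd with rfl | rfl | rfl | rfl
  · exact C.hg0
  · exact neg_ne_zero.mpr C.hg0
  · exact C.hr0
  · exact neg_ne_zero.mpr C.hr0

lemma xadj_gen {d : Γ} (hd : d ∈ ({C.g, -C.g, C.r, -C.r} : Set Γ)) (a : Γ) :
    C.X.Adj (d + a) a := by
  refine ⟨fun h => C.sgen_ne_zero hd ?_, Or.inr (by rw [add_sub_cancel_right]; exact hd)⟩
  exact add_right_cancel (h.trans (zero_add a).symm)

lemma xadj_gen' {d : Γ} (hd : d ∈ ({C.g, -C.g, C.r, -C.r} : Set Γ)) (a : Γ) :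
    C.X.Adj a (d + a) := (C.xadj_gen hd a).symm

lemma xadj_char {a b : Γ} (h : C.X.Adj a b) :
    b = C.g + a ∨ b = -C.g + a ∨ b = C.r + a ∨ b = -C.r + a := by
  obtain ⟨hne, hd | hd⟩ := h
  · simp only [Set.mem_insert_iff, Set.mem_singleton_iff] at hd
    rcases hd with h' | h' | h' | h' <;> rw [sub_eq_iff_eq_add] at h'
    · exact Or.inl h'
    · exact Or.inr (Or.inl h')
    · exact Or.inr (Or.inr (Or.inl h'))
    · exact Or.inr (Or.inr (Or.inr h'))
  · simp only [Set.mem_insert_iff, Set.mem_singleton_iff] at hd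
    rcases hd with h' | h' | h' | h' <;> rw [sub_eq_iff_eq_add] at h'
    · refine Or.inr (Or.inl ?_)
      rw [h', neg_add_cancel_left]
    · refine Or.inl ?_
      rw [h', ← add_assoc]
      rw [show C.g + -C.g = 0 from add_neg_cancel _, zero_add]
    · refine Or.inr (Or.inr (Or.inr ?_))
      rw [h', neg_add_cancel_left]
    · refine Or.inr (Or.inr (Or.inl ?_))
      rw [h', ← add_assoc, show C.r + -C.r = 0 from add_neg_cancel _, zero_add]

variable [Fintype Γ]

lemma nbr_distinct (a : Γ) :
    C.g + a ≠ -C.g + a ∧ C.g + a ≠ C.r + a ∧ C.g + a ≠ -C.r + a ∧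
    -C.g + a ≠ C.r + a ∧ -C.g + a ≠ -C.r + a ∧ C.r + a ≠ -C.r + a := by
  refine ⟨?_, ?_, ?_, ?_, ?_, ?_⟩ <;> intro h <;> have h' := add_right_cancel h
  · refine C.h2g0 ?_
    nth_rewrite 2 [h']
    exact add_neg_cancel _
  · exact C.hgr h'
  · exact C.hgnr h'
  · exact C.hgnr (by rw [← h', neg_neg])
  · exact C.hgr (neg_injective h')
  · refine C.h2r0 ?_
    nth_rewrite 2 [h']
    exact add_neg_cancel _

/-- For each vertex there is a unique `G`-neighbour that is not an `X`-neighbour. -/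
lemma matching_exists_unique (G : SimpleGraph Γ) (hX : C.X ≤ G)
    (hreg : ∀ v : Γ, (G.neighborSet v).ncard = 5) (a : Γ) :
    ∃! b, G.Adj a b ∧ ¬ C.X.Adj a b := by
  classical
  set NX : Set Γ := {C.g + a, -C.g + a, C.r + a, -C.r + a} with hNX
  obtain ⟨d1, d2, d3, d4, d5, d6⟩ := C.nbr_distinct a
  have hNXcard : NX.ncard = 4 := by
    rw [hNX, Set.ncard_insert_of_notMem (by simp [d1, d2, d3]),
      Set.ncard_insert_of_notMem (by simp [d4, d5]),
      Set.ncard_insert_of_notMem (by simp [d6]), Set.ncard_singleton]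
  have hNXsub : NX ⊆ G.neighborSet a := by
    intro b hb
    apply hX
    rcases hb with rfl | rfl | rfl | rfl
    · exact C.xadj_gen' (d := C.g) (by simp) a
    · exact C.xadj_gen' (d := -C.g) (by simp) a
    · exact C.xadj_gen' (d := C.r) (by simp) a
    · exact C.xadj_gen' (d := -C.r) (by simp) a
  have hxmem : ∀ b, C.X.Adj a b → b ∈ NX := by
    intro b hb
    rcases C.xadj_char hb with rfl | rfl | rfl | rfl <;> simp [hNX]
  have hex : ∃ b ∈ G.neighborSet a, b ∉ NX := by
    by_contra hcon
    push_neg at hcon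
    have hsub : G.neighborSet a ⊆ NX := hcon
    have := Set.ncard_le_ncard hsub (Set.toFinite NX)
    rw [hreg a, hNXcard] at this
    omega
  obtain ⟨b, hbN, hbNX⟩ := hex
  refine ⟨b, ⟨hbN, fun hx => hbNX (hxmem b hx)⟩, ?_⟩
  rintro b' ⟨hb'N, hb'X⟩
  by_contra hne
  have hb'NX : b' ∉ NX := fun h => hb'X (by
    rcases h with rfl | rfl | rfl | rfl
    · exact C.xadj_gen' (d := C.g) (by simp) a
    · exact C.xadj_gen' (d := -C.g) (by simp) a
    · exact C.xadj_gen' (d := C.r) (by simp) a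
    · exact C.xadj_gen' (d := -C.r) (by simp) a)
  have hsub : insert b' (insert b NX) ⊆ G.neighborSet a := by
    intro x hx
    rcases hx with rfl | rfl | hx
    · exact hb'N
    · exact hbN
    · exact hNXsub hx
  have hc1 : (insert b NX).ncard = 5 := by
    rw [Set.ncard_insert_of_notMem hbNX, hNXcard]
  have hc2 : (insert b' (insert b NX)).ncard = 6 := by
    rw [Set.ncard_insert_of_notMem (by simp [hne, hb'NX]), hc1]
  have := Set.ncard_le_ncard hsub (Set.toFinite _)
  rw [hreg a, hc2] at this
  omega

variable (G : SimpleGraph Γ) (hX : C.X ≤ G)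
  (hreg : ∀ v : Γ, (G.neighborSet v).ncard = 5)

noncomputable def mf : Γ → Γ :=
  fun a => Classical.choose (C.matching_exists_unique G hX hreg a)

lemma mf_adj (a : Γ) : G.Adj a (C.mf G hX hreg a) :=
  (Classical.choose_spec (C.matching_exists_unique G hX hreg a)).1.1

lemma mf_nx (a : Γ) : ¬ C.X.Adj a (C.mf G hX hreg a) :=
  (Classical.choose_spec (C.matching_exists_unique G hX hreg a)).1.2

lemma mf_unique {a b : Γ} (h1 : G.Adj a b) (h2 : ¬ C.X.Adj a b) :
    b = C.mf G hX hreg a :=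
  (Classical.choose_spec (C.matching_exists_unique G hX hreg a)).2 b ⟨h1, h2⟩

lemma mf_invol (a : Γ) : C.mf G hX hreg (C.mf G hX hreg a) = a :=
  ((C.mf_unique G hX hreg (C.mf_adj G hX hreg a).symm
    (fun hx => C.mf_nx G hX hreg a hx.symm))).symm

lemma mf_ne (a : Γ) : C.mf G hX hreg a ≠ a :=
  fun h => (G.loopless.irrefl a) (by have := C.mf_adj G hX hreg a; rwa [h] at this)

/-- The pick function: chooses one endpoint of each matching edge. -/
noncomputable def pk : Γ → Prop := fun a => WellOrderingRel a (C.mf G hX hreg a)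

lemma pk_or (a : Γ) : C.pk G hX hreg a ∨ C.pk G hX hreg (C.mf G hX hreg a) := by
  unfold pk
  rw [C.mf_invol]
  rcases trichotomous_of WellOrderingRel a (C.mf G hX hreg a) with h | h | h
  · exact Or.inl h
  · exact absurd h.symm (C.mf_ne G hX hreg a)
  · exact Or.inr h

lemma pk_not_both (a : Γ) : ¬ (C.pk G hX hreg a ∧ C.pk G hX hreg (C.mf G hX hreg a)) := by
  rintro ⟨h1, h2⟩
  unfold pk at h1 h2
  rw [C.mf_invol] at h2
  exact irrefl_of WellOrderingRel a (trans_of WellOrderingRel h1 h2)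

-- ## Layer 5: value lemmas

omit [Fintype Γ] in
lemma val_eq {i i' : ZMod 4} {j j' : ZMod 2} (h1 : i = i') (h2 : j = j') :
    C.φ i j = C.φ i' j' := C.φ_eq_iff.mpr ⟨h1, h2⟩

omit [Fintype Γ] in
lemma negS : -C.S = C.S := by
  rw [show C.S = C.φ 2 1 from rfl, C.φ_neg]
  exact C.val_eq (by decide) (by decide)

omit [Fintype Γ] in
lemma negT : -C.T = C.T := by
  rw [show C.T = C.φ 0 1 from rfl, C.φ_neg]
  exact C.val_eq (by decide) (by decide)

omit [Fintype Γ] in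
lemma add_gS : C.g + C.S = -C.r := by
  rw [← C.φ_g, show C.S = C.φ 2 1 from rfl, C.φ_add, ← C.φ_nr]
  exact C.val_eq (by decide) (by decide)

omit [Fintype Γ] in
lemma add_ngS : -C.g + C.S = C.r := by
  rw [← C.φ_ng, show C.S = C.φ 2 1 from rfl, C.φ_add, ← C.φ_r]
  exact C.val_eq (by decide) (by decide)

omit [Fintype Γ] in
lemma add_gT : C.g + C.T = C.r := by
  rw [← C.φ_g, show C.T = C.φ 0 1 from rfl, C.φ_add, ← C.φ_r]
  exact C.val_eq (by decide) (by decide)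

omit [Fintype Γ] in
lemma add_ngT : -C.g + C.T = -C.r := by
  rw [← C.φ_ng, show C.T = C.φ 0 1 from rfl, C.φ_add, ← C.φ_nr]
  exact C.val_eq (by decide) (by decide)

omit [Fintype Γ] in
lemma add_Sg : C.S + C.g = -C.r := by
  rw [← C.φ_g, show C.S = C.φ 2 1 from rfl, C.φ_add, ← C.φ_nr]
  exact C.val_eq (by decide) (by decide)

omit [Fintype Γ] in
lemma add_Sng : C.S + -C.g = C.r := by
  rw [← C.φ_ng, show C.S = C.φ 2 1 from rfl, C.φ_add, ← C.φ_r]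
  exact C.val_eq (by decide) (by decide)

omit [Fintype Γ] in
lemma add_Tg : C.T + C.g = C.r := by
  rw [← C.φ_g, show C.T = C.φ 0 1 from rfl, C.φ_add, ← C.φ_r]
  exact C.val_eq (by decide) (by decide)

omit [Fintype Γ] in
lemma add_Tng : C.T + -C.g = -C.r := by
  rw [← C.φ_ng, show C.T = C.φ 0 1 from rfl, C.φ_add, ← C.φ_nr]
  exact C.val_eq (by decide) (by decide)

omit [Fintype Γ] in
lemma add_SS : C.S + C.S = 0 := by
  rw [show C.S = C.φ 2 1 from rfl, C.φ_add, ← C.φ_zero]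
  exact C.val_eq (by decide) (by decide)

omit [Fintype Γ] in
lemma add_TT : C.T + C.T = 0 := by
  rw [show C.T = C.φ 0 1 from rfl, C.φ_add, ← C.φ_zero]
  exact C.val_eq (by decide) (by decide)

omit [Fintype Γ] in
lemma add_ST : C.S + C.T = C.Z := by
  rw [show C.S = C.φ 2 1 from rfl, show C.T = C.φ 0 1 from rfl, C.φ_add]
  exact C.val_eq (by decide) (by decide)

omit [Fintype Γ] in
lemma add_TS : C.T + C.S = C.Z := by
  rw [show C.S = C.φ 2 1 from rfl, show C.T = C.φ 0 1 from rfl, C.φ_add]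
  exact C.val_eq (by decide) (by decide)

omit [Fintype Γ] in
lemma add_gg : C.g + C.g = C.Z := C.φ_z.symm

omit [Fintype Γ] in
lemma add_ngng : -C.g + -C.g = C.Z := by
  rw [← C.φ_ng, C.φ_add]
  exact C.val_eq (by decide) (by decide)

omit [Fintype Γ] in
lemma hST : C.S ≠ C.T := fun h => absurd (C.φ_inj h).1 (by decide)

omit [Fintype Γ] in
lemma hS0 : C.S ≠ 0 := C.φ_ne_zero (by decide)

omit [Fintype Γ] in
lemma hT0 : C.T ≠ 0 := C.φ_ne_zero (by decide)

omit [Fintype Γ] in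
lemma hZ0 : C.Z ≠ 0 := C.φ_ne_zero (by decide)

omit [Fintype Γ] in
lemma SSu (x : Γ) : C.S + (C.S + x) = x := by
  rw [show C.S = C.φ 2 1 from rfl, C.φφ]
  rw [show C.φ (2+2) (1+1) = C.φ 0 0 from C.val_eq (by decide) (by decide), C.φ_zero, zero_add]

omit [Fintype Γ] in
lemma TTu (x : Γ) : C.T + (C.T + x) = x := by
  rw [show C.T = C.φ 0 1 from rfl, C.φφ]
  rw [show C.φ (0+0) (1+1) = C.φ 0 0 from C.val_eq (by decide) (by decide), C.φ_zero, zero_add]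

omit [Fintype Γ] in
lemma Zu_g (x : Γ) : C.Z + x = C.g + (C.g + x) := by
  rw [← C.φ_g, C.φφ]
  exact congrArg (· + x) (C.val_eq (by decide) (by decide))

omit [Fintype Γ] in
lemma Zu_r (x : Γ) : C.Z + x = C.r + (C.r + x) := by
  rw [← C.φ_r, C.φφ]
  exact congrArg (· + x) (C.val_eq (by decide) (by decide))

-- combined tables
omit [Fintype Γ] in
lemma srg_val {m : Γ → Γ} (u : Γ) :
    C.sr m u + C.eg m u = C.S ∨ C.sr m u + C.eg m u = C.T := by
  rcases C.sr_cases m u with h1 | h1 <;> rcases C.eg_cases m u with h2 | h2 <;> rw [h1, h2]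
  · exact Or.inl C.add_rg
  · exact Or.inr C.add_rng
  · exact Or.inr C.add_nrg
  · exact Or.inl C.add_nrng

-- ## Layer 6: the paths

variable {G}

noncomputable def pV (u : Γ) : Γ := C.eg (C.mf G hX hreg) u + u

noncomputable def pW (u : Γ) : Γ := C.sr (C.mf G hX hreg) u + C.pV hX hreg u

omit [Fintype Γ] in
lemma eg_mem (m : Γ → Γ) (u : Γ) : C.eg m u ∈ ({C.g, -C.g, C.r, -C.r} : Set Γ) := by
  rcases C.eg_cases m u with h | h <;> rw [h] <;> simp

omit [Fintype Γ] in
lemma sr_mem (m : Γ → Γ) (u : Γ) : C.sr m u ∈ ({C.g, -C.g, C.r, -C.r} : Set Γ) := by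
  rcases C.sr_cases m u with h | h <;> rw [h] <;> simp

lemma adj01 (u : Γ) : G.Adj (C.pW hX hreg u) (C.pV hX hreg u) :=
  hX (C.xadj_gen (C.sr_mem _ u) _)

lemma adj12 (u : Γ) : G.Adj (C.pV hX hreg u) u :=
  hX (C.xadj_gen (C.eg_mem _ u) _)

noncomputable def walkP (u : Γ) :
    G.Walk (C.pW hX hreg u) (C.pW hX hreg (C.mf G hX hreg u)) :=
  .cons (C.adj01 hX hreg u) (.cons (C.adj12 hX hreg u)
    (.cons (C.mf_adj G hX hreg u) (.cons (C.adj12 hX hreg (C.mf G hX hreg u)).symm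
      (.cons (C.adj01 hX hreg (C.mf G hX hreg u)).symm .nil))))

lemma walkP_support (u : Γ) : (C.walkP hX hreg u).support =
    [C.pW hX hreg u, C.pV hX hreg u, u, C.mf G hX hreg u,
     C.pV hX hreg (C.mf G hX hreg u), C.pW hX hreg (C.mf G hX hreg u)] := rfl

lemma walkP_edges (u : Γ) : (C.walkP hX hreg u).edges =
    [s(C.pW hX hreg u, C.pV hX hreg u), s(C.pV hX hreg u, u),
     s(u, C.mf G hX hreg u), s(C.mf G hX hreg u, C.pV hX hreg (C.mf G hX hreg u)),
     s(C.pV hX hreg (C.mf G hX hreg u), C.pW hX hreg (C.mf G hX hreg u))] := rfl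

lemma walkP_length (u : Γ) : (C.walkP hX hreg u).length = 5 := rfl

lemma mf_not_step (u : Γ) {d : Γ} (hd : d ∈ ({C.g, -C.g, C.r, -C.r} : Set Γ)) :
    C.mf G hX hreg u ≠ d + u := by
  intro h
  exact C.mf_nx G hX hreg u (h ▸ C.xadj_gen' hd u)

omit [Fintype Γ] in
lemma nodup_master (m : Γ → Γ) (hm_inv : ∀ a, m (m a) = a) (hne : ∀ a, m a ≠ a)
    (hstep : ∀ a, ∀ d ∈ ({C.g, -C.g, C.r, -C.r} : Set Γ), m a ≠ d + a) (u : Γ) :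
    List.Nodup [C.sr m u + (C.eg m u + u), C.eg m u + u, u, m u,
      C.eg m (m u) + m u, C.sr m (m u) + (C.eg m (m u) + m u)] := by
  set v : Γ := m u with hv
  set b : Γ := C.eg m u with hb
  set c : Γ := C.sr m u with hc
  set b' : Γ := C.eg m v with hb'
  set c' : Γ := C.sr m v with hc'
  have hbo : b = C.g ∨ b = -C.g := C.eg_cases m u
  have hco : c = C.r ∨ c = -C.r := C.sr_cases m u
  have hbo' : b' = C.g ∨ b' = -C.g := C.eg_cases m v
  have hco' : c' = C.r ∨ c' = -C.r := C.sr_cases m v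
  have hcb : c + b = C.S ∨ c + b = C.T := C.srg_val u
  have hcb' : c' + b' = C.S ∨ c' + b' = C.T := C.srg_val v
  have hb0 : b ≠ 0 := by rcases hbo with h | h <;> rw [h]
                         · exact C.hg0
                         · exact neg_ne_zero.mpr C.hg0
  have hb0' : b' ≠ 0 := by rcases hbo' with h | h <;> rw [h]
                           · exact C.hg0
                           · exact neg_ne_zero.mpr C.hg0
  have hc0 : c ≠ 0 := by rcases hco with h | h <;> rw [h]
                         · exact C.hr0
                         · exact neg_ne_zero.mpr C.hr0
  have hc0' : c' ≠ 0 := by rcases hco' with h | h <;> rw [h]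
                           · exact C.hr0
                           · exact neg_ne_zero.mpr C.hr0
  have hcb0 : c + b ≠ 0 := by rcases hcb with h | h <;> rw [h]
                              · exact C.hS0
                              · exact C.hT0
  have hcb0' : c' + b' ≠ 0 := by rcases hcb' with h | h <;> rw [h]
                                 · exact C.hS0
                                 · exact C.hT0
  have hvu : v ≠ u := hne u
  have hvstep : ∀ d ∈ ({C.g, -C.g, C.r, -C.r} : Set Γ), v ≠ d + u := fun d hd => hstep u d hd
  have hustep : ∀ d ∈ ({C.g, -C.g, C.r, -C.r} : Set Γ), u ≠ d + v := by
    intro d hd h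
    have h2 := hstep v d hd
    rw [hm_inv] at h2
    exact h2 h
  -- L5 consequences at u
  have hL5u_s : v = C.S + u → c + b = C.T := fun h => C.L5s m u (hv ▸ h)
  have hL5u_t : v = C.T + u → c + b = C.S := fun h => C.L5t m hm_inv u (hv ▸ h)
  -- L5 consequences at v
  have hL5v_s : v = C.S + u → c' + b' = C.T := by
    intro h
    refine C.L5s m v ?_
    have h1 : m v = u := hm_inv u
    rw [h1, h, C.SSu]
  have hL5v_t : v = C.T + u → c' + b' = C.S := by
    intro h
    refine C.L5t m hm_inv v ?_
    have h1 : m v = u := hm_inv u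
    rw [h1, h, C.TTu]
  -- Z-shift consequences
  have hZbc : v = C.Z + u → (b' = b ∧ c' = c) := by
    intro h
    constructor
    · rw [hb', hb, h, C.Zu_g, C.eg_shift, C.eg_shift]
    · rw [hc', hc, h, C.Zu_r, C.sr_shift, C.sr_shift]
  have hZcase : v ≠ C.Z + u ∨ (c' + b' = c + b) := by
    by_cases h : v = C.Z + u
    · obtain ⟨h1, h2⟩ := hZbc h
      exact Or.inr (by rw [h1, h2])
    · exact Or.inl h
  -- the fifteen inequalities
  have N01 : c + (b + u) ≠ b + u := by
    intro h
    exact hc0 (add_right_cancel (h.trans (zero_add (b + u)).symm))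
  have N02 : c + (b + u) ≠ u := by
    intro h
    rw [← add_assoc] at h
    exact hcb0 (add_right_cancel (h.trans (zero_add u).symm))
  have N03 : c + (b + u) ≠ v := by
    intro h
    rw [← add_assoc] at h
    rcases hcb with h3 | h3
    · rw [h3] at h
      exact C.hST ((hL5u_s h.symm).symm.trans h3).symm
    · rw [h3] at h
      exact C.hST (h3.symm.trans (hL5u_t h.symm)).symm
  have N04 : c + (b + u) ≠ b' + v := by
    intro h
    rw [← add_assoc] at h
    have h2 : -b' + (c + b + u) = v := by rw [h, neg_add_cancel_left]
    rw [← add_assoc] at h2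
    rcases hbo' with h4 | h4 <;> rcases hcb with h3 | h3 <;> rw [h4, h3] at h2
    · rw [C.add_ngS] at h2
      exact hvstep C.r (by simp) h2.symm
    · rw [C.add_ngT] at h2
      exact hvstep (-C.r) (by simp) h2.symm
    · rw [neg_neg, C.add_gS] at h2
      exact hvstep (-C.r) (by simp) h2.symm
    · rw [neg_neg, C.add_gT] at h2
      exact hvstep C.r (by simp) h2.symm
  have N05 : c + (b + u) ≠ c' + (b' + v) := by
    intro h
    rw [← add_assoc, ← add_assoc] at h
    have h2 : -(c' + b') + (c + b + u) = v := by rw [h, neg_add_cancel_left]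
    rcases hcb with h3 | h3 <;> rcases hcb' with h4 | h4 <;> rw [h3, h4] at h2
    · rw [C.negS, C.SSu] at h2
      exact hvu h2.symm
    · rw [C.negT, ← add_assoc, C.add_TS] at h2
      rcases hZcase with hnz | heq
      · exact hnz h2.symm
      · rw [h3, h4] at heq
        exact C.hST heq.symm
    · rw [C.negS, ← add_assoc, C.add_ST] at h2
      rcases hZcase with hnz | heq
      · exact hnz h2.symm
      · rw [h3, h4] at heq
        exact C.hST heq
    · rw [C.negT, C.TTu] at h2
      exact hvu h2.symm
  have N12 : b + u ≠ u := by
    intro h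
    exact hb0 (add_right_cancel (h.trans (zero_add u).symm))
  have N13 : b + u ≠ v := by
    intro h
    rcases hbo with h4 | h4 <;> rw [h4] at h
    · exact hvstep C.g (by simp) h.symm
    · exact hvstep (-C.g) (by simp) h.symm
  have N14 : b + u ≠ b' + v := by
    intro h
    have h2 : -b' + (b + u) = v := by rw [h, neg_add_cancel_left]
    rcases hbo with h4 | h4 <;> rcases hbo' with h5 | h5 <;> rw [h4, h5] at h2
    · rw [neg_add_cancel_left] at h2
      exact hvu h2.symm
    · rw [neg_neg, ← add_assoc, C.add_gg] at h2
      rcases hZcase with hnz | _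
      · exact hnz h2.symm
      · obtain ⟨h6, _⟩ := hZbc h2.symm
        rw [h4, h5] at h6
        refine C.h2g0 ?_
        nth_rewrite 2 [← h6]
        exact add_neg_cancel _
    · rw [← add_assoc, C.add_ngng] at h2
      rcases hZcase with hnz | _
      · exact hnz h2.symm
      · obtain ⟨h6, _⟩ := hZbc h2.symm
        rw [h4, h5] at h6
        refine C.h2g0 ?_
        nth_rewrite 2 [h6]
        exact add_neg_cancel _
    · rw [neg_neg, add_neg_cancel_left] at h2
      exact hvu h2.symm
  have N15 : b + u ≠ c' + (b' + v) := by
    intro h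
    rw [← add_assoc] at h
    have h2 : -(c' + b') + (b + u) = v := by rw [h, neg_add_cancel_left]
    rcases hcb' with h4 | h4 <;> rcases hbo with h5 | h5 <;> rw [h4, h5] at h2
    · rw [C.negS, ← add_assoc, C.add_Sg] at h2
      exact hvstep (-C.r) (by simp) h2.symm
    · rw [C.negS, ← add_assoc, C.add_Sng] at h2
      exact hvstep C.r (by simp) h2.symm
    · rw [C.negT, ← add_assoc, C.add_Tg] at h2
      exact hvstep C.r (by simp) h2.symm
    · rw [C.negT, ← add_assoc, C.add_Tng] at h2
      exact hvstep (-C.r) (by simp) h2.symm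
  have N23 : u ≠ v := fun h => hvu h.symm
  have N24 : u ≠ b' + v := by
    intro h
    have h2 : -b' + u = v := by rw [h, neg_add_cancel_left]
    rcases hbo' with h4 | h4 <;> rw [h4] at h2
    · exact hvstep (-C.g) (by simp) h2.symm
    · rw [neg_neg] at h2
      exact hvstep C.g (by simp) h2.symm
  have N25 : u ≠ c' + (b' + v) := by
    intro h
    rw [← add_assoc] at h
    have h2 : -(c' + b') + u = v := by rw [h, neg_add_cancel_left]
    rcases hcb' with h4 | h4 <;> rw [h4] at h2
    · rw [C.negS] at h2
      exact C.hST ((hL5v_s h2.symm).symm.trans h4).symm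
    · rw [C.negT] at h2
      exact C.hST (h4.symm.trans (hL5v_t h2.symm)).symm
  have N34 : v ≠ b' + v := by
    intro h
    exact hb0' (add_right_cancel (h.symm.trans (zero_add v).symm))
  have N35 : v ≠ c' + (b' + v) := by
    intro h
    rw [← add_assoc] at h
    exact hcb0' (add_right_cancel (h.symm.trans (zero_add v).symm))
  have N45 : b' + v ≠ c' + (b' + v) := by
    intro h
    exact hc0' (add_right_cancel (h.symm.trans (zero_add (b' + v)).symm))
  refine List.nodup_cons.mpr ⟨?_, List.nodup_cons.mpr ⟨?_, List.nodup_cons.mpr ⟨?_,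
    List.nodup_cons.mpr ⟨?_, List.nodup_cons.mpr ⟨?_, List.nodup_singleton _⟩⟩⟩⟩⟩
  · simp only [List.mem_cons, List.not_mem_nil, or_false, List.mem_singleton]
    push_neg
    exact ⟨N01, N02, N03, N04, N05⟩
  · simp only [List.mem_cons, List.not_mem_nil, or_false, List.mem_singleton]
    push_neg
    exact ⟨N12, N13, N14, N15⟩
  · simp only [List.mem_cons, List.not_mem_nil, or_false, List.mem_singleton]
    push_neg
    exact ⟨N23, N24, N25⟩
  · simp only [List.mem_cons, List.not_mem_nil, or_false, List.mem_singleton]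
    push_neg
    exact ⟨N34, N35⟩
  · simp only [List.mem_cons, List.not_mem_nil, or_false, List.mem_singleton]
    push_neg
    exact N45

-- ## Layer 7: coverage helpers

omit [Fintype Γ] in
lemma add_rr : C.r + C.r = C.Z := by
  rw [← C.φ_r, C.φ_add]
  exact C.val_eq (by decide) (by decide)

omit [Fintype Γ] in
lemma add_nrnr : -C.r + -C.r = C.Z := by
  rw [← C.φ_nr, C.φ_add]
  exact C.val_eq (by decide) (by decide)

omit [Fintype Γ] in
lemma Zu_ng (x : Γ) : C.Z + x = -C.g + (-C.g + x) := by
  rw [← C.φ_ng, C.φφ]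
  exact congrArg (· + x) (C.val_eq (by decide) (by decide))

omit [Fintype Γ] in
lemma Zu_nr (x : Γ) : C.Z + x = -C.r + (-C.r + x) := by
  rw [← C.φ_nr, C.φφ]
  exact congrArg (· + x) (C.val_eq (by decide) (by decide))

omit [Fintype Γ] in
lemma eg_shift' (m : Γ → Γ) (u : Γ) : C.eg m (-C.g + u) = C.eg m u := by
  have h := C.eg_shift m (-C.g + u)
  rw [add_neg_cancel_left] at h
  exact h.symm

omit [Fintype Γ] in
lemma sr_shift' (m : Γ → Γ) (u : Γ) : C.sr m (-C.r + u) = C.sr m u := by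
  have h := C.sr_shift m (-C.r + u)
  rw [add_neg_cancel_left] at h
  exact h.symm

omit [Fintype Γ] in
lemma comm_sg {x y : Γ} (hx : x = C.g ∨ x = -C.g) (hy : y = C.r ∨ y = -C.r) :
    AddCommute x y := by
  have h : AddCommute C.g C.r := C.hcgr
  rcases hx with rfl | rfl <;> rcases hy with rfl | rfl
  · exact h
  · exact h.neg_right
  · exact h.neg_left
  · exact h.neg_left.neg_right

omit [Fintype Γ] in
lemma swap3 {a b : Γ} (h : AddCommute a b) (x : Γ) : a + (b + x) = b + (a + x) := by
  rw [← add_assoc, h.eq, add_assoc]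

omit [Fintype Γ] in
lemma ng_ne_r : -C.g ≠ C.r := fun h => C.hgnr (by rw [← h, neg_neg])

omit [Fintype Γ] in
lemma ng_ne_nr : -C.g ≠ -C.r := fun h => C.hgr (neg_injective h)

omit [Fintype Γ] in
lemma ge_ne_sr {x y : Γ} (hx : x = C.g ∨ x = -C.g) (hy : y = C.r ∨ y = -C.r) : x ≠ y := by
  rcases hx with rfl | rfl <;> rcases hy with rfl | rfl
  · exact C.hgr
  · exact C.hgnr
  · exact C.ng_ne_r
  · exact C.ng_ne_nr

omit [Fintype Γ] in
lemma eg_eq_of (m : Γ → Γ) {w1 w2 x : Γ} (hx : x = C.g ∨ x = -C.g) (h : w1 = x + w2) :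
    C.eg m w1 = C.eg m w2 := by
  subst h
  rcases hx with rfl | rfl
  · exact C.eg_shift m w2
  · exact C.eg_shift' m w2

omit [Fintype Γ] in
lemma sr_eq_of (m : Γ → Γ) {w1 w2 x : Γ} (hx : x = C.r ∨ x = -C.r) (h : w1 = x + w2) :
    C.sr m w1 = C.sr m w2 := by
  subst h
  rcases hx with rfl | rfl
  · exact C.sr_shift m w2
  · exact C.sr_shift' m w2

omit [Fintype Γ] in
lemma eg_eq_of_Z (m : Γ → Γ) {w1 w2 : Γ} (h : w1 = C.Z + w2) :
    C.eg m w1 = C.eg m w2 := by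
  subst h
  rw [C.Zu_g, C.eg_shift, C.eg_shift]

omit [Fintype Γ] in
lemma sr_eq_of_Z (m : Γ → Γ) {w1 w2 : Γ} (h : w1 = C.Z + w2) :
    C.sr m w1 = C.sr m w2 := by
  subst h
  rw [C.Zu_r, C.sr_shift, C.sr_shift]

-- Injectivity of the map `w ↦ eg w + w`.
omit [Fintype Γ] in
lemma y_inj (m : Γ → Γ) {w1 w2 : Γ} (h : C.eg m w1 + w1 = C.eg m w2 + w2) : w1 = w2 := by
  rcases C.eg_cases m w1 with h1 | h1 <;> rcases C.eg_cases m w2 with h2 | h2 <;>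
    rw [h1, h2] at h
  · exact add_left_cancel h
  · -- g + w1 = -g + w2 : w2 = g + (g + w1) = Z + w1
    have hw : w2 = C.Z + w1 := by
      rw [C.Zu_g, h, add_neg_cancel_left]
    have := C.eg_eq_of_Z m hw
    rw [h2, h1] at this
    exact absurd this.symm (fun hh => C.h2g0 (by nth_rewrite 2 [hh]; exact add_neg_cancel _))
  · have hw : w2 = C.Z + w1 := by
      rw [C.Zu_ng, h, neg_add_cancel_left]
    have := C.eg_eq_of_Z m hw
    rw [h2, h1] at this
    exact absurd this (fun hh => C.h2g0 (by nth_rewrite 2 [hh]; exact add_neg_cancel _))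
  · exact add_left_cancel h

-- Same `sr` value when the `y`-positions differ by `±r`.
omit [Fintype Γ] in
lemma sr_eq_of_y (m : Γ → Γ) {w1 w2 σ : Γ} (hσ : σ = C.r ∨ σ = -C.r)
    (h : C.eg m w2 + w2 = σ + (C.eg m w1 + w1)) : C.sr m w2 = C.sr m w1 := by
  have h2 : w2 = -(C.eg m w2) + (σ + (C.eg m w1 + w1)) := by
    rw [← h, neg_add_cancel_left]
  rcases C.eg_cases m w1 with e1 | e1 <;> rcases C.eg_cases m w2 with e2 | e2 <;>
    rw [e1, e2] at h2
  · -- ε₁ = ε₂ = g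
    rw [swap3 (C.comm_sg (Or.inl rfl) hσ).neg_left, neg_add_cancel_left] at h2
    exact C.sr_eq_of m hσ h2
  · -- ε₁ = g, ε₂ = -g
    rw [neg_neg, swap3 (C.comm_sg (Or.inl rfl) hσ), ← C.Zu_g] at h2
    exact (C.sr_eq_of m hσ h2).trans (C.sr_eq_of_Z m rfl)
  · -- ε₁ = -g, ε₂ = g
    rw [swap3 (C.comm_sg (Or.inl rfl) hσ).neg_left, ← C.Zu_ng] at h2
    exact (C.sr_eq_of m hσ h2).trans (C.sr_eq_of_Z m rfl)
  · -- ε₁ = ε₂ = -g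
    rw [neg_neg, swap3 (C.comm_sg (Or.inl rfl) hσ), add_neg_cancel_left] at h2
    exact C.sr_eq_of m hσ h2

-- ## Layer 8: tokens

-- token Sym2 edges
noncomputable def gT (m : Γ → Γ) (w : Γ) : Sym2 Γ := s(C.eg m w + w, w)
noncomputable def rT (m : Γ → Γ) (w : Γ) : Sym2 Γ := s(C.sr m w + (C.eg m w + w), C.eg m w + w)
def mTk (m : Γ → Γ) (w : Γ) : Sym2 Γ := s(w, m w)

omit [Fintype Γ] in
lemma gT_inj (m : Γ → Γ) {w1 w2 : Γ} (h : C.gT m w1 = C.gT m w2) : w1 = w2 := by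
  unfold gT at h
  rw [Sym2.eq_iff] at h
  rcases h with ⟨-, rfl⟩ | ⟨ha, hb⟩
  · rfl
  · exfalso
    have hee : C.eg m w1 = C.eg m w2 := C.eg_eq_of m (C.eg_cases m w2) hb
    have h0 : C.eg m w2 + C.eg m w1 = 0 := by
      have : w1 = (C.eg m w2 + C.eg m w1) + w1 := by
        rw [add_assoc, ha]
        exact hb
      exact (add_right_cancel ((zero_add w1).trans this)).symm
    rw [hee] at h0
    rcases C.eg_cases m w2 with h4 | h4 <;> rw [h4] at h0
    · exact C.h2g0 h0
    · rw [C.add_ngng] at h0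
      exact C.hZ0 h0
omit [Fintype Γ] in
lemma rT_inj (m : Γ → Γ) {w1 w2 : Γ} (h : C.rT m w1 = C.rT m w2) : w1 = w2 := by
  unfold rT at h
  rw [Sym2.eq_iff] at h
  rcases h with ⟨-, hy⟩ | ⟨ha, hb⟩
  · exact C.y_inj m hy
  · exfalso
    have hss : C.sr m w2 = C.sr m w1 :=
      C.sr_eq_of_y m (C.sr_cases m w1) ha.symm
    have h0 : C.sr m w2 + C.sr m w1 = 0 := by
      have : (C.eg m w1 + w1) = (C.sr m w2 + C.sr m w1) + (C.eg m w1 + w1) := by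
        rw [add_assoc, ha]
        exact hb
      exact (add_right_cancel ((zero_add _).trans this)).symm
    rw [hss] at h0
    rcases C.sr_cases m w1 with h4 | h4 <;> rw [h4] at h0
    · rw [C.add_rr] at h0
      exact C.hZ0 h0
    · rw [C.add_nrnr] at h0
      exact C.hZ0 h0
omit [Fintype Γ] in
lemma mT_inj (m : Γ → Γ) {w1 w2 : Γ} (h : mTk m w1 = mTk m w2) :
    w1 = w2 ∨ w1 = m w2 := by
  unfold mTk at h
  rw [Sym2.eq_iff] at h
  rcases h with ⟨rfl, -⟩ | ⟨h1, -⟩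
  · exact Or.inl rfl
  · exact Or.inr h1
omit [Fintype Γ] in
lemma gr_ne (m : Γ → Γ) (w1 w2 : Γ) : C.gT m w1 ≠ C.rT m w2 := by
  intro hcon
  unfold gT rT at hcon
  rw [Sym2.eq_iff] at hcon
  rcases hcon with ⟨ha, hb⟩ | ⟨ha, hb⟩
  · rw [hb] at ha
    have h2 : C.eg m (C.eg m w2 + w2) = C.eg m w2 := C.eg_eq_of m (C.eg_cases m w2) rfl
    rw [h2] at ha
    exact C.ge_ne_sr (C.eg_cases m w2) (C.sr_cases m w2) (add_right_cancel ha)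
  · have h0 : C.sr m w2 + C.eg m w1 = 0 := by
      have : w1 = (C.sr m w2 + C.eg m w1) + w1 := by
        rw [add_assoc, ha]
        exact hb
      exact (add_right_cancel ((zero_add w1).trans this)).symm
    have h1 : C.eg m w1 = -(C.sr m w2) := eq_neg_of_add_eq_zero_right h0
    rcases C.eg_cases m w1 with h4 | h4 <;> rcases C.sr_cases m w2 with h5 | h5 <;>
      rw [h4, h5] at h1
    · exact C.hgnr h1
    · rw [neg_neg] at h1
      exact C.hgr h1
    · exact C.ng_ne_nr h1
    · rw [neg_neg] at h1
      exact C.ng_ne_r h1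
omit [Fintype Γ] in
lemma gm_ne (m : Γ → Γ)
    (hstep : ∀ a, ∀ d ∈ ({C.g, -C.g, C.r, -C.r} : Set Γ), m a ≠ d + a)
    (w1 w2 : Γ) : C.gT m w1 ≠ mTk m w2 := by
  intro hcon
  unfold gT mTk at hcon
  rw [Sym2.eq_iff] at hcon
  rcases hcon with ⟨ha, hb⟩ | ⟨ha, hb⟩
  · -- eg w1 + w1 = w2, w1 = m w2
    have h2 : m w2 = -(C.eg m w1) + w2 := by
      conv_rhs => rw [← ha]
      rw [neg_add_cancel_left]
      exact hb.symm
    refine hstep w2 (-(C.eg m w1)) ?_ h2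
    rcases C.eg_cases m w1 with h4 | h4 <;> rw [h4]
    · simp
    · rw [neg_neg]; simp
  · -- eg w1 + w1 = m w2, w1 = w2
    subst hb
    exact hstep w1 (C.eg m w1) (C.eg_mem m w1) ha.symm
omit [Fintype Γ] in
lemma rm_ne (m : Γ → Γ)
    (hstep : ∀ a, ∀ d ∈ ({C.g, -C.g, C.r, -C.r} : Set Γ), m a ≠ d + a)
    (w1 w2 : Γ) : C.rT m w1 ≠ mTk m w2 := by
  intro hcon
  unfold rT mTk at hcon
  rw [Sym2.eq_iff] at hcon
  rcases hcon with ⟨ha, hb⟩ | ⟨ha, hb⟩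
  · -- sr w1 + y1 = w2, y1 = m w2
    have h2 : m w2 = -(C.sr m w1) + w2 := by
      conv_rhs => rw [← ha]
      rw [neg_add_cancel_left]
      exact hb.symm
    refine hstep w2 (-(C.sr m w1)) ?_ h2
    rcases C.sr_cases m w1 with h4 | h4 <;> rw [h4]
    · simp
    · rw [neg_neg]; simp
  · -- sr w1 + y1 = m w2, y1 = w2
    rw [hb] at ha
    exact hstep w2 (C.sr m w1) (C.sr_mem m w1) ha.symm

lemma walkP_isPath (u : Γ) : (C.walkP hX hreg u).IsPath := by
  rw [SimpleGraph.Walk.isPath_def, C.walkP_support hX hreg u]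
  have h := C.nodup_master (C.mf G hX hreg) (C.mf_invol G hX hreg) (C.mf_ne G hX hreg)
    (fun a d hd => C.mf_not_step hX hreg a hd) u
  simpa only [pV, pW] using h

lemma mem_edges_iff (u : Γ) {e : Sym2 Γ} :
    e ∈ (C.walkP hX hreg u).edges ↔
      e = C.rT (C.mf G hX hreg) u ∨ e = C.gT (C.mf G hX hreg) u ∨
      e = mTk (C.mf G hX hreg) u ∨ e = C.gT (C.mf G hX hreg) (C.mf G hX hreg u) ∨
      e = C.rT (C.mf G hX hreg) (C.mf G hX hreg u) := by
  rw [C.walkP_edges hX hreg u]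
  simp only [List.mem_cons, List.not_mem_nil, or_false]
  unfold rT gT mTk pV pW
  constructor
  · rintro (h | h | h | h | h)
    · exact Or.inl h
    · exact Or.inr (Or.inl h)
    · exact Or.inr (Or.inr (Or.inl h))
    · exact Or.inr (Or.inr (Or.inr (Or.inl (h.trans (Sym2.eq_swap)))))
    · exact Or.inr (Or.inr (Or.inr (Or.inr (h.trans (Sym2.eq_swap)))))
  · rintro (h | h | h | h | h)
    · exact Or.inl h
    · exact Or.inr (Or.inl h)
    · exact Or.inr (Or.inr (Or.inl h))
    · exact Or.inr (Or.inr (Or.inr (Or.inl (h.trans (Sym2.eq_swap)))))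
    · exact Or.inr (Or.inr (Or.inr (Or.inr (h.trans (Sym2.eq_swap)))))

-- ## Layer 9: existence and uniqueness of covering paths

omit [Fintype Γ] in
lemma exists_gtok (m : Γ → Γ) (a : Γ) : ∃ w, C.gT m w = s(a, C.g + a) := by
  rcases C.eg_cases m a with h | h
  · refine ⟨a, ?_⟩
    unfold gT
    rw [h]
    exact Sym2.eq_swap
  · refine ⟨C.g + a, ?_⟩
    unfold gT
    have h2 : C.eg m (C.g + a) = -C.g := by rw [C.eg_shift]; exact h
    rw [h2, neg_add_cancel_left]

omit [Fintype Γ] in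
lemma y_at (m : Γ → Γ) (a : Γ) : C.eg m (-(C.eg m a) + a) + (-(C.eg m a) + a) = a := by
  have h : C.eg m (-(C.eg m a) + a) = C.eg m a := by
    rcases C.eg_cases m a with h | h
    · rw [h, C.eg_shift']
      exact h
    · rw [h, neg_neg, C.eg_shift]
      exact h
  rw [h, add_neg_cancel_left]

omit [Fintype Γ] in
lemma exists_rtok (m : Γ → Γ) (a : Γ) : ∃ w, C.rT m w = s(a, C.r + a) := by
  set w1 : Γ := -(C.eg m a) + a with hw1
  have hy1 : C.eg m w1 + w1 = a := C.y_at m a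
  set w2 : Γ := -(C.eg m (C.r + a)) + (C.r + a) with hw2
  have hy2 : C.eg m w2 + w2 = C.r + a := C.y_at m (C.r + a)
  have hsr12 : C.sr m w2 = C.sr m w1 := by
    refine C.sr_eq_of_y m (Or.inl rfl) ?_
    rw [hy1, hy2]
  rcases C.sr_cases m w1 with h | h
  · refine ⟨w1, ?_⟩
    unfold rT
    rw [hy1, h]
    exact Sym2.eq_swap
  · refine ⟨w2, ?_⟩
    unfold rT
    rw [hy2, hsr12, h, neg_add_cancel_left]

-- representative of the matching pair
noncomputable def rep (w : Γ) : Γ := if C.pk G hX hreg w then w else C.mf G hX hreg w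

lemma rep_pk (w : Γ) : C.pk G hX hreg (C.rep hX hreg w) := by
  unfold rep
  split_ifs with h
  · exact h
  · rcases C.pk_or G hX hreg w with h1 | h1
    · exact absurd h1 h
    · exact h1

lemma rep_site (w : Γ) :
    w = C.rep hX hreg w ∨ w = C.mf G hX hreg (C.rep hX hreg w) := by
  unfold rep
  split_ifs with h
  · exact Or.inl rfl
  · exact Or.inr (C.mf_invol G hX hreg w).symm

lemma tok_mem_edges (w : Γ) :
    C.gT (C.mf G hX hreg) w ∈ (C.walkP hX hreg (C.rep hX hreg w)).edges ∧
    C.rT (C.mf G hX hreg) w ∈ (C.walkP hX hreg (C.rep hX hreg w)).edges ∧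
    mTk (C.mf G hX hreg) w ∈ (C.walkP hX hreg (C.rep hX hreg w)).edges := by
  rcases C.rep_site hX hreg w with h | h
  · refine ⟨(C.mem_edges_iff hX hreg _).mpr ?_, (C.mem_edges_iff hX hreg _).mpr ?_,
      (C.mem_edges_iff hX hreg _).mpr ?_⟩
    · exact Or.inr (Or.inl (by rw [← h]))
    · exact Or.inl (by rw [← h])
    · exact Or.inr (Or.inr (Or.inl (by rw [← h])))
  · set u : Γ := C.rep hX hreg w with hu
    refine ⟨(C.mem_edges_iff hX hreg _).mpr ?_, (C.mem_edges_iff hX hreg _).mpr ?_,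
      (C.mem_edges_iff hX hreg _).mpr ?_⟩
    · exact Or.inr (Or.inr (Or.inr (Or.inl (by rw [← h]))))
    · exact Or.inr (Or.inr (Or.inr (Or.inr (by rw [← h]))))
    · refine Or.inr (Or.inr (Or.inl ?_))
      unfold mTk
      rw [h, C.mf_invol G hX hreg]
      exact Sym2.eq_swap

/-- Every edge of `G` lies on one of the chosen paths. -/
lemma cover_exists {e : Sym2 Γ} (he : e ∈ G.edgeSet) :
    ∃ u, C.pk G hX hreg u ∧ e ∈ (C.walkP hX hreg u).edges := by
  induction e with
  | _ x y =>
    rw [SimpleGraph.mem_edgeSet] at he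
    by_cases hxa : C.X.Adj x y
    · -- an X-edge : g-type or r-type
      have key : ∃ w, C.gT (C.mf G hX hreg) w = s(x, y) ∨ C.rT (C.mf G hX hreg) w = s(x, y) := by
        rcases C.xadj_char hxa with h | h | h | h
        · obtain ⟨w, hw⟩ := C.exists_gtok (C.mf G hX hreg) x
          exact ⟨w, Or.inl (by rw [hw, h])⟩
        · obtain ⟨w, hw⟩ := C.exists_gtok (C.mf G hX hreg) y
          refine ⟨w, Or.inl (by rw [hw, h, add_neg_cancel_left]; exact Sym2.eq_swap)⟩
        · obtain ⟨w, hw⟩ := C.exists_rtok (C.mf G hX hreg) x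
          exact ⟨w, Or.inr (by rw [hw, h])⟩
        · obtain ⟨w, hw⟩ := C.exists_rtok (C.mf G hX hreg) y
          refine ⟨w, Or.inr (by rw [hw, h, add_neg_cancel_left]; exact Sym2.eq_swap)⟩
      obtain ⟨w, hw | hw⟩ := key
      · exact ⟨C.rep hX hreg w, C.rep_pk hX hreg w,
          hw ▸ (C.tok_mem_edges hX hreg w).1⟩
      · exact ⟨C.rep hX hreg w, C.rep_pk hX hreg w,
          hw ▸ (C.tok_mem_edges hX hreg w).2.1⟩
    · -- a matching edge
      have hy : y = C.mf G hX hreg x := C.mf_unique G hX hreg he hxa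
      refine ⟨C.rep hX hreg x, C.rep_pk hX hreg x, ?_⟩
      have : mTk (C.mf G hX hreg) x = s(x, y) := by rw [mTk, hy]
      exact this ▸ (C.tok_mem_edges hX hreg x).2.2

omit [Fintype Γ] in
lemma site_resolve (m : Γ → Γ) (hm_inv : ∀ a, m (m a) = a) {u1 u2 a b : Γ}
    (ha : a = u1 ∨ a = m u1) (hb : b = u2 ∨ b = m u2) (h : a = b) :
    u1 = u2 ∨ u1 = m u2 := by
  rcases ha with rfl | rfl <;> rcases hb with rfl | rfl
  · exact Or.inl h
  · exact Or.inr h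
  · right
    have h2 := congrArg m h
    rwa [hm_inv] at h2
  · exact Or.inl (m_inj hm_inv h)

/-- Two chosen paths sharing an edge have related anchors. -/
lemma cover_unique_aux (m : Γ → Γ) (hm_inv : ∀ a, m (m a) = a)
    (hstep : ∀ a, ∀ d ∈ ({C.g, -C.g, C.r, -C.r} : Set Γ), m a ≠ d + a)
    {u1 u2 : Γ} {e : Sym2 Γ}
    (h1 : e = C.rT m u1 ∨ e = C.gT m u1 ∨ e = mTk m u1 ∨
          e = C.gT m (m u1) ∨ e = C.rT m (m u1))
    (h2 : e = C.rT m u2 ∨ e = C.gT m u2 ∨ e = mTk m u2 ∨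
          e = C.gT m (m u2) ∨ e = C.rT m (m u2)) :
    u1 = u2 ∨ u1 = m u2 := by
  have hgm := C.gm_ne m hstep
  have hrm := C.rm_ne m hstep
  have hgr := C.gr_ne m
  rcases h1 with h1 | h1 | h1 | h1 | h1 <;> rcases h2 with h2 | h2 | h2 | h2 | h2 <;>
    have he := h1.symm.trans h2
  · exact site_resolve m hm_inv (Or.inl rfl) (Or.inl rfl) (C.rT_inj m he)
  · exact absurd he.symm (hgr _ _)
  · exact absurd he (hrm _ _)
  · exact absurd he.symm (hgr _ _)
  · exact site_resolve m hm_inv (Or.inl rfl) (Or.inr rfl) (C.rT_inj m he)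
  · exact absurd he (hgr _ _)
  · exact site_resolve m hm_inv (Or.inl rfl) (Or.inl rfl) (C.gT_inj m he)
  · exact absurd he (hgm _ _)
  · exact site_resolve m hm_inv (Or.inl rfl) (Or.inr rfl) (C.gT_inj m he)
  · exact absurd he (hgr _ _)
  · exact absurd he.symm (hrm _ _)
  · exact absurd he.symm (hgm _ _)
  · exact mT_inj m he
  · exact absurd he.symm (hgm _ _)
  · exact absurd he.symm (hrm _ _)
  · exact absurd he (hgr _ _)
  · exact site_resolve m hm_inv (Or.inr rfl) (Or.inl rfl) (C.gT_inj m he)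
  · exact absurd he (hgm _ _)
  · exact site_resolve m hm_inv (Or.inr rfl) (Or.inr rfl) (C.gT_inj m he)
  · exact absurd he (hgr _ _)
  · exact site_resolve m hm_inv (Or.inr rfl) (Or.inl rfl) (C.rT_inj m he)
  · exact absurd he.symm (hgr _ _)
  · exact absurd he (hrm _ _)
  · exact absurd he.symm (hgr _ _)
  · exact site_resolve m hm_inv (Or.inr rfl) (Or.inr rfl) (C.rT_inj m he)

end Ctx
end Stmt12


open Stmt12 in
/-- Every 5-regular graph `G` that contains a spanning Cayley graph
`X(Γ, {g,-g,r,-r})`, where `{g,r}` is a simple commutative generator satisfying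
`2g + 2r = 0` and `2g - 2r = 0`, admits an `M_{g,r}`-centered `P_5`-decomposition,
where `M_{g,r} = E(G) \ E(X)`. -/
theorem stmt_12 {Γ : Type*} [AddGroup Γ] [Fintype Γ] (g r : Γ)
    (hg0 : g ≠ 0) (hr0 : r ≠ 0) (h2g0 : g + g ≠ 0) (h2r0 : r + r ≠ 0)
    (hgr : g ≠ r) (hgnr : g ≠ -r) (hcomm : g + r = r + g)
    (h1 : g + g + (r + r) = 0) (h2 : g + g - (r + r) = 0)
    (G : SimpleGraph Γ) (hX : cayleyGraph ({g, -g, r, -r} : Set Γ) ≤ G)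
    (hreg : ∀ v : Γ, (G.neighborSet v).ncard = 5) :
    ∃ D : Set (Σ u : Γ, Σ v : Γ, G.Walk u v),
      (∀ T ∈ D, T.2.2.IsPath ∧ T.2.2.length = 5 ∧
        ∃ e ∈ G.edgeSet \ (cayleyGraph ({g, -g, r, -r} : Set Γ)).edgeSet,
          T.2.2.edges[2]? = some e) ∧
      ∀ e ∈ G.edgeSet, ∃! T, T ∈ D ∧ e ∈ T.2.2.edges := by
  classical
  let C : Ctx Γ := ⟨g, r, hg0, hr0, h2g0, h2r0, hgr, hgnr, hcomm, h1, h2⟩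
  have hX' : C.X ≤ G := hX
  refine ⟨{T | ∃ u, C.pk G hX' hreg u ∧
      (⟨_, _, C.walkP hX' hreg u⟩ : Σ u : Γ, Σ v : Γ, G.Walk u v) = T}, ?_, ?_⟩
  · rintro T ⟨u, hpk, rfl⟩
    refine ⟨C.walkP_isPath hX' hreg u, C.walkP_length hX' hreg u,
      s(u, C.mf G hX' hreg u), ⟨?_, ?_⟩, ?_⟩
    · exact (SimpleGraph.mem_edgeSet G).mpr (C.mf_adj G hX' hreg u)
    · intro hmem
      exact C.mf_nx G hX' hreg u ((SimpleGraph.mem_edgeSet _).mp hmem)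
    · rw [C.walkP_edges hX' hreg u]
      rfl
  · intro e he
    obtain ⟨u, hpku, hmem⟩ := C.cover_exists hX' hreg he
    refine ⟨⟨_, _, C.walkP hX' hreg u⟩, ⟨⟨u, hpku, rfl⟩, hmem⟩, ?_⟩
    rintro T ⟨⟨u', hpku', rfl⟩, hmem'⟩
    have hres := C.cover_unique_aux (C.mf G hX' hreg) (C.mf_invol G hX' hreg)
      (fun a d hd => C.mf_not_step hX' hreg a hd)
      ((C.mem_edges_iff hX' hreg u').mp hmem') ((C.mem_edges_iff hX' hreg u).mp hmem)
    rcases hres with rfl | hres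
    · rfl
    · exfalso
      rw [hres] at hpku'
      exact C.pk_not_both G hX' hreg u ⟨hpku, hpku'⟩
end
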